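/- arXiv:1810.08535 — 7 statements merged into one kernel-verified Lean document; each statement's English description precedes it below -/
import Mathlib

section
/- Let a > 0 and 0 < t < a, and let v ∈ ℝ with nearest-integer part ⟦v⟧ ∈ [-1/2, 1/2). Then √t · e^{π⟦v⟧²/t} · θ₃(v | it) = 1 + 2e^{-π/t} cosh(2π⟦v⟧/t) + R, where |R| ≤ 2e^{-2π/t}/(1 - e^{-π/a}). -/
open Real Complex

theorem theta3_gaussian_approx (a t v : ℝ) (ha : 0 < a) (ht : 0 < t) (hta : t < a)
    (m : ℤ) (r : ℝ) (hr₁ : -(1/2) ≤ r) (hr₂ : r < 1/2) (hv : v = m + r) :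
    ∃ R : ℂ,
      (Real.sqrt t : ℂ) * Real.exp (π * r ^ 2 / t) *
          ∑' n : ℤ, Complex.exp (-(π : ℂ) * t * n ^ 2 + 2 * π * Complex.I * n * v)
        = 1 + 2 * Real.exp (-π / t) * Real.cosh (2 * π * r / t) + R ∧
      ‖R‖ ≤ 2 * Real.exp (-2 * π / t) / (1 - Real.exp (-π / a)) := by
  have hπ := Real.pi_pos
  set q : ℝ := Real.exp (-2 * π / t) with hqdef
  have hq0 : 0 < q := Real.exp_pos _
  have hq1 : q < 1 := Real.exp_lt_one_iff.mpr (div_neg_of_neg_of_pos (by nlinarith) ht)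
  set f : ℤ → ℝ := fun k => Real.exp (-(π * ((k : ℝ) ^ 2 - 2 * k * r)) / t) with hfdef
  have habs : |r| ≤ 1 / 2 := abs_le.mpr ⟨hr₁, hr₂.le⟩
  -- pointwise bound by a geometric-type sequence
  have hfb : ∀ k : ℤ, f k ≤ q ^ (k.natAbs - 1) := by
    intro k
    rw [hqdef, ← Real.exp_nat_mul]
    apply Real.exp_le_exp.mpr
    have hk : ((k.natAbs : ℝ)) = |(k : ℝ)| := by rw [Nat.cast_natAbs, Int.cast_abs]
    have h2kr : |2 * (k : ℝ) * r| ≤ |(k : ℝ)| := by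
      rw [abs_mul, abs_mul, _root_.abs_two]
      nlinarith [abs_nonneg (k : ℝ), abs_nonneg r]
    have hsq : ((k.natAbs : ℝ)) ^ 2 = (k : ℝ) ^ 2 := by rw [hk, _root_.sq_abs]
    have hc : 2 * ((k.natAbs - 1 : ℕ) : ℝ) ≤ ((k.natAbs : ℝ)) ^ 2 - (k.natAbs : ℝ) := by
      rcases k.natAbs with _ | _ | n
      · norm_num
      · norm_num
      · push_cast
        nlinarith [Nat.cast_nonneg (α := ℝ) n]
    have key : 2 * ((k.natAbs - 1 : ℕ) : ℝ) ≤ (k : ℝ) ^ 2 - 2 * k * r := by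
      have := (abs_le.mp h2kr).2
      nlinarith [hk, hsq]
    have hrw : ((k.natAbs - 1 : ℕ) : ℝ) * (-2 * π / t) = -(2 * π * ((k.natAbs - 1 : ℕ) : ℝ)) / t := by
      ring
    rw [hrw, div_le_div_iff_of_pos_right ht]
    nlinarith [mul_le_mul_of_nonneg_left key hπ.le]
  -- summability
  have hnat : Summable (fun n : ℕ => q ^ (n - 1)) := by
    apply Summable.of_nonneg_of_le (fun n => by positivity) (fun n => ?_)
      ((summable_geometric_of_lt_one hq0.le hq1).mul_left q⁻¹)
    have h1 : q ^ (n - 1) = q⁻¹ * q ^ (n - 1 + 1) := by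
      rw [pow_succ]; field_simp
    rw [h1]
    exact mul_le_mul_of_nonneg_left
      (pow_le_pow_of_le_one hq0.le hq1.le (by omega)) (by positivity)
  have hgs : Summable (fun k : ℤ => q ^ (k.natAbs - 1)) := by
    apply Summable.of_nat_of_neg
    · simpa using hnat
    · simpa using hnat
  have hfs : Summable f := Summable.of_nonneg_of_le (fun k => (Real.exp_pos _).le) hfb hgs
  -- main identity via the Jacobi transformation
  set g : ℤ → ℝ := fun n => Real.exp (-(π * ((n : ℝ) - v) ^ 2) / t) with hgdef
  have htC : 0 < ((t : ℂ)).re := by simpa using ht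
  have key := Complex.tsum_exp_neg_quadratic htC ((I : ℂ) * v)
  have hT : (∑' n : ℤ, Complex.exp (-(π : ℂ) * t * n ^ 2 + 2 * π * Complex.I * n * v))
      = ∑' n : ℤ, Complex.exp (-(π:ℂ) * t * n ^ 2 + 2 * π * (I * v) * n) :=
    tsum_congr fun n => by congr 1; ring
  have hterm : ∀ n : ℤ, Complex.exp (-(π:ℂ) / t * (n + I * (I * v)) ^ 2) = ((g n : ℝ) : ℂ) := by
    intro n
    rw [hgdef, Complex.ofReal_exp]
    congr 1
    have h1 : ((n : ℂ) + I * (I * ↑v)) = (((n : ℝ) - v : ℝ) : ℂ) := by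
      rw [← mul_assoc, Complex.I_mul_I]; push_cast; ring
    rw [h1]
    push_cast
    ring
  have hsqt : ((t : ℂ)) ^ (1 / 2 : ℂ) = (Real.sqrt t : ℂ) := by
    rw [Real.sqrt_eq_rpow, Complex.ofReal_cpow ht.le]
    norm_num
  have hre : Real.exp (π * r ^ 2 / t) * ∑' n : ℤ, g n = ∑' k, f k := by
    rw [← (Equiv.addRight m).tsum_eq g, ← tsum_mul_left]
    refine tsum_congr fun k => ?_
    simp only [Equiv.coe_addRight, hgdef, hfdef]
    rw [← Real.exp_add]
    congr 1
    rw [hv]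
    push_cast
    ring
  have hne : (Real.sqrt t : ℂ) ≠ 0 := by
    simpa using (Real.sqrt_ne_zero'.mpr ht)
  have main : (Real.sqrt t : ℂ) * Real.exp (π * r ^ 2 / t) *
      (∑' n : ℤ, Complex.exp (-(π : ℂ) * t * n ^ 2 + 2 * π * Complex.I * n * v))
      = ((∑' k, f k : ℝ) : ℂ) := by
    rw [hT, key, tsum_congr hterm, ← Complex.ofReal_tsum, hsqt, ← hre]
    push_cast
    field_simp
  -- splitting off the three central terms
  have hsplit := Summable.sum_add_tsum_compl (s := ({-1, 0, 1} : Finset ℤ)) hfs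
  have hsum : ∑ x ∈ ({-1, 0, 1} : Finset ℤ), f x
      = 1 + 2 * Real.exp (-π / t) * Real.cosh (2 * π * r / t) := by
    rw [Finset.sum_insert (by decide), Finset.sum_insert (by decide), Finset.sum_singleton]
    have e0 : f 0 = 1 := by simp [hfdef]
    have e1 : f 1 = Real.exp (-π / t + 2 * π * r / t) := by
      simp only [hfdef]; push_cast; congr 1; ring
    have e2 : f (-1) = Real.exp (-π / t + -(2 * π * r / t)) := by
      simp only [hfdef]; push_cast; congr 1; ring
    rw [e0, e1, e2, Real.cosh_eq, Real.exp_add, Real.exp_add, Real.exp_neg]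
    field_simp
    ring
  set R' : ℝ := ∑' (x : ↑((↑({-1, 0, 1} : Finset ℤ) : Set ℤ)ᶜ)), f ↑x with hR'def
  refine ⟨((R' : ℝ) : ℂ), ?_, ?_⟩
  · rw [main, ← hsplit, hsum]
    push_cast
    ring
  · -- the remainder bound
    have hR'0 : 0 ≤ R' := tsum_nonneg fun _ => (Real.exp_pos _).le
    set h : ℤ → ℝ := fun k => if k.natAbs ≤ 1 then 0 else q ^ (k.natAbs - 1) with hhdef
    have base : HasSum (fun n : ℕ => q ^ (n + 1)) (q * (1 - q)⁻¹) := by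
      simpa [pow_succ'] using (hasSum_geometric_of_lt_one hq0.le hq1).mul_left q
    have hpos : HasSum (fun n : ℕ => h (n : ℤ)) (q / (1 - q)) := by
      refine (hasSum_nat_add_iff' 2).mp ?_
      have e1 : (fun n : ℕ => h ((n + 2 : ℕ) : ℤ)) = fun n : ℕ => q ^ (n + 1) := by
        funext n
        simp only [hhdef, Int.natAbs_natCast]
        rw [if_neg (by omega)]
        congr 1
      have e2 : ∑ i ∈ Finset.range 2, h (i : ℤ) = 0 := by
        simp [hhdef, Finset.sum_range_succ]
      rw [e1, e2, sub_zero, div_eq_mul_inv]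
      exact base
    have hneg : HasSum (fun n : ℕ => h (-((n : ℤ) + 1))) (q / (1 - q)) := by
      refine (hasSum_nat_add_iff' 1).mp ?_
      have e1 : (fun n : ℕ => h (-(((n + 1 : ℕ) : ℤ) + 1))) = fun n : ℕ => q ^ (n + 1) := by
        funext n
        simp only [hhdef, Int.natAbs_neg]
        rw [show (((n + 1 : ℕ) : ℤ) + 1) = ((n + 2 : ℕ) : ℤ) by push_cast; ring, Int.natAbs_natCast]
        rw [if_neg (by omega)]
        congr 1
      have e2 : ∑ i ∈ Finset.range 1, h (-((i : ℤ) + 1)) = 0 := by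
        simp [hhdef, Finset.sum_range_succ]
      rw [e1, e2, sub_zero, div_eq_mul_inv]
      exact base
    have hhs : HasSum h (q / (1 - q) + q / (1 - q)) := HasSum.of_nat_of_neg_add_one hpos hneg
    have hcomp : R' ≤ q / (1 - q) + q / (1 - q) := by
      rw [hR'def, ← hhs.tsum_eq]
      refine (hfs.subtype _).tsum_le_tsum_of_inj Subtype.val Subtype.coe_injective
        (fun c _ => ?_) (fun b => ?_) hhs.summable
      · rw [hhdef]; dsimp only; split <;> positivity
      · obtain ⟨k, hk⟩ := b
        have hk2 : ¬ k.natAbs ≤ 1 := by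
          simp only [Set.mem_compl_iff, Finset.coe_insert, Set.mem_insert_iff,
            Finset.coe_singleton, Set.mem_singleton_iff, Finset.mem_coe,
            Finset.mem_insert, Finset.mem_singleton] at hk
          omega
        show f k ≤ h k
        rw [hhdef]
        dsimp only
        rw [if_neg hk2]
        exact hfb k
    have hd1 : 0 < 1 - q := by linarith
    have hA1 : Real.exp (-π / a) < 1 :=
      Real.exp_lt_one_iff.mpr (div_neg_of_neg_of_pos (by linarith) ha)
    have hqa : q ≤ Real.exp (-π / a) := by
      rw [hqdef]
      apply Real.exp_le_exp.mpr
      rw [div_le_div_iff₀ ht ha]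
      nlinarith [mul_le_mul_of_nonneg_left hta.le hπ.le, mul_pos hπ ha]
    calc ‖((R' : ℝ) : ℂ)‖ = R' := by rw [Complex.norm_real, Real.norm_eq_abs, _root_.abs_of_nonneg hR'0]
      _ ≤ q / (1 - q) + q / (1 - q) := hcomp
      _ = 2 * q / (1 - q) := by ring
      _ ≤ 2 * q / (1 - Real.exp (-π / a)) := by
          gcongr <;> linarith
end

section
/- Let a > 0 and 0 < t < a, and let v ∈ ℝ with ((v)) = frac(v) - 1/2. Then √t · e^{π((v))²/t} · θ₄(v | it) = 1 + 2e^{-π/t} cosh(2π((v))/t) + R, where |R| ≤ 2e^{-2π/t}/(1 - e^{-π/a}). -/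
open Real Complex

theorem theta4_gaussian_approx (a t v : ℝ) (ha : 0 < a) (ht : 0 < t) (hta : t < a) :
    ∃ R : ℂ,
      (Real.sqrt t : ℂ) * Real.exp (π * (Int.fract v - 1/2) ^ 2 / t) *
          ∑' n : ℤ, (-1 : ℂ) ^ n *
            Complex.exp (-(π : ℂ) * t * n ^ 2 + 2 * π * Complex.I * n * v)
        = 1 + 2 * Real.exp (-π / t) * Real.cosh (2 * π * (Int.fract v - 1/2) / t) + R ∧
      ‖R‖ ≤ 2 * Real.exp (-2 * π / t) / (1 - Real.exp (-π / a)) := by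
  have pi_pos := Real.pi_pos
  set w : ℝ := Int.fract v - 1/2 with hwdef
  have hw1 : |w| ≤ 1/2 := by
    rw [abs_le]
    have h1 := Int.fract_nonneg v
    have h2 := Int.fract_lt_one v
    constructor <;> [skip; skip] <;> simp only [hwdef] <;> linarith
  set f : ℤ → ℝ := fun k => Real.exp (-(π/t) * ((k:ℝ)^2 - 2*k*w)) with hfdef
  set r : ℝ := Real.exp (-π/a) with hrdef
  set c : ℝ := Real.exp (-2*π/t) with hcdef
  have hr0 : 0 ≤ r := (Real.exp_pos _).le
  have hr1 : r < 1 := by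
    rw [hrdef, Real.exp_lt_one_iff]
    exact div_neg_of_neg_of_pos (by linarith) ha
  have hr1' : 0 < 1 - r := by linarith
  -- key pointwise bound
  have hpi : π/a ≤ π/t := by
    rw [div_le_div_iff₀ ha ht]
    nlinarith
  have key : ∀ k : ℤ, 2 ≤ k.natAbs → f k ≤ c * r ^ (k.natAbs - 2) := by
    intro k hk
    have hmabs : ((k.natAbs : ℝ)) = |((k:ℝ))| := by
      rw [Nat.cast_natAbs, Int.cast_abs]
    have hm2 : (2:ℝ) ≤ (k.natAbs:ℝ) := by exact_mod_cast hk
    have hksq : (k:ℝ)^2 = ((k.natAbs:ℝ))^2 := by rw [hmabs, _root_.sq_abs]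
    have h2kw : 2*(k:ℝ)*w ≤ (k.natAbs:ℝ) := by
      calc 2*(k:ℝ)*w ≤ |2*(k:ℝ)*w| := le_abs_self _
        _ = 2 * |(k:ℝ)| * |w| := by rw [abs_mul, abs_mul]; norm_num
        _ ≤ 2 * |(k:ℝ)| * (1/2) := by
            apply mul_le_mul_of_nonneg_left hw1
            positivity
        _ = (k.natAbs:ℝ) := by rw [hmabs]; ring
    have hcast : ((k.natAbs - 2 : ℕ) : ℝ) = (k.natAbs:ℝ) - 2 := by
      rw [Nat.cast_sub hk]; norm_num
    have hX : 2 + ((k.natAbs:ℝ) - 2) ≤ (k:ℝ)^2 - 2*k*w := by nlinarith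
    have hrw : c * r ^ (k.natAbs - 2)
        = Real.exp (-(π/t)*2 + ((k.natAbs:ℝ) - 2) * (-(π/a))) := by
      rw [hcdef, hrdef, ← Real.exp_nat_mul, ← Real.exp_add, hcast]
      congr 1
      ring
    rw [hrw]
    simp only [hfdef]
    rw [Real.exp_le_exp]
    have h0 : 0 ≤ (k.natAbs:ℝ) - 2 := by linarith
    have hptpos : 0 ≤ π/t := (div_pos pi_pos ht).le
    nlinarith [mul_le_mul_of_nonneg_left hX hptpos, mul_le_mul_of_nonneg_right hpi h0]
  have hgeom : Summable (fun n : ℕ => c * r ^ n) :=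
    (summable_geometric_of_lt_one hr0 hr1).mul_left c
  have hnat2 : ∀ n : ℕ, ((n:ℤ) + 2).natAbs = n + 2 := by intro n; omega
  have hneg2 : ∀ n : ℕ, (-((n:ℤ) + 2)).natAbs = n + 2 := by intro n; omega
  have hbd_pos : ∀ n : ℕ, f ((n:ℤ) + 2) ≤ c * r ^ n := by
    intro n
    have := key ((n:ℤ)+2) (by rw [hnat2]; omega)
    rwa [hnat2, Nat.add_sub_cancel] at this
  have hbd_neg : ∀ n : ℕ, f (-((n:ℤ) + 2)) ≤ c * r ^ n := by
    intro n
    have := key (-((n:ℤ)+2)) (by rw [hneg2]; omega)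
    rwa [hneg2, Nat.add_sub_cancel] at this
  have hfpos : ∀ k : ℤ, 0 < f k := fun k => Real.exp_pos _
  have hsum2 : Summable (fun n : ℕ => f ((n:ℤ) + 2)) :=
    Summable.of_nonneg_of_le (fun n => (hfpos _).le) hbd_pos hgeom
  have hsum2' : Summable (fun n : ℕ => f (-((n:ℤ) + 2))) :=
    Summable.of_nonneg_of_le (fun n => (hfpos _).le) hbd_neg hgeom
  have hsnat : Summable (fun n : ℕ => f (n:ℤ)) := by
    rw [← summable_nat_add_iff 2]
    convert hsum2 using 2 with n
    case e'_3 => rfl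
    case e'_5 => exact congrArg f (by push_cast; ring)
  have hsneg : Summable (fun n : ℕ => f (-(n:ℤ))) := by
    rw [← summable_nat_add_iff 2]
    convert hsum2' using 2 with n
    case e'_3 => rfl
    case e'_5 => exact congrArg f (by push_cast; ring)
  have hfs : Summable f := hsnat.of_nat_of_neg hsneg
  -- the tails
  set Tp : ℝ := ∑' n : ℕ, f ((n:ℤ) + 2) with hTp
  set Tm : ℝ := ∑' n : ℕ, f (-((n:ℤ) + 2)) with hTm
  have hgeomsum : ∑' n : ℕ, c * r ^ n = c * (1 - r)⁻¹ := by
    rw [tsum_mul_left, tsum_geometric_of_lt_one hr0 hr1]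
  have hTple : Tp ≤ c * (1 - r)⁻¹ := by
    rw [hTp, ← hgeomsum]; exact Summable.tsum_le_tsum hbd_pos hsum2 hgeom
  have hTmle : Tm ≤ c * (1 - r)⁻¹ := by
    rw [hTm, ← hgeomsum]; exact Summable.tsum_le_tsum hbd_neg hsum2' hgeom
  have hTppos : 0 ≤ Tp := tsum_nonneg fun n => (hfpos _).le
  have hTmpos : 0 ≤ Tm := tsum_nonneg fun n => (hfpos _).le
  -- splitting the sum
  have hsplit_pos : ∑' n : ℕ, f (n:ℤ) = f 0 + f 1 + Tp := by
    have h := Summable.sum_add_tsum_nat_add (f := fun n : ℕ => f (n:ℤ)) 2 hsnat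
    rw [Finset.sum_range_succ, Finset.sum_range_one] at h
    rw [← h, hTp]
    have e0 : f ((0:ℕ):ℤ) = f 0 := by norm_num
    have e1 : f ((1:ℕ):ℤ) = f 1 := by norm_num
    rw [e0, e1]
    congr 1
    try exact tsum_congr fun n => by congr 1; push_cast; ring
  have hsplit_neg : ∑' n : ℕ, f (-(n:ℤ)) = f 0 + f (-1) + Tm := by
    have h := Summable.sum_add_tsum_nat_add (f := fun n : ℕ => f (-(n:ℤ))) 2 hsneg
    rw [Finset.sum_range_succ, Finset.sum_range_one] at h
    rw [← h, hTm]
    have e0 : f (-((0:ℕ):ℤ)) = f 0 := by norm_num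
    have e1 : f (-((1:ℕ):ℤ)) = f (-1) := by norm_num
    rw [e0, e1]
    congr 1
    try exact tsum_congr fun n => by congr 1; push_cast; ring
  have hf0 : f 0 = 1 := by simp [hfdef]
  have hf1 : f 1 + f (-1) = 2 * Real.exp (-π / t) * Real.cosh (2 * π * w / t) := by
    simp only [hfdef]
    rw [Real.cosh_eq]
    rw [show (2:ℝ) * Real.exp (-π/t) * ((Real.exp (2*π*w/t) + Real.exp (-(2*π*w/t)))/2)
        = Real.exp (-π/t + 2*π*w/t) + Real.exp (-π/t + -(2*π*w/t)) by
      rw [Real.exp_add, Real.exp_add]; ring]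
    push_cast
    congr 1 <;> rw [Real.exp_eq_exp] <;> field_simp <;> ring
  have htot : ∑' k : ℤ, f k
      = 1 + 2 * Real.exp (-π / t) * Real.cosh (2 * π * w / t) + (Tp + Tm) := by
    rw [Summable.tsum_of_nat_of_neg hsnat hsneg, hsplit_pos, hsplit_neg, hf0]
    linarith [hf1]
  -- analytic identity via Poisson summation
  have ht' : 0 < ((t:ℂ)).re := by simpa using ht
  have step2 := Complex.tsum_exp_neg_quadratic ht' (Complex.I * ((v:ℂ) + 1/2))
  have step1 : (∑' n : ℤ, (-1 : ℂ) ^ n *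
        Complex.exp (-(π : ℂ) * t * n ^ 2 + 2 * π * Complex.I * n * v))
      = ∑' n : ℤ, Complex.exp (-(π:ℂ) * (t:ℂ) * (n:ℂ) ^ 2
          + 2 * (π:ℂ) * (Complex.I * ((v:ℂ) + 1/2)) * (n:ℂ)) := by
    refine tsum_congr fun n => ?_
    have e : Complex.exp (-(π:ℂ) * (t:ℂ) * (n:ℂ) ^ 2
          + 2 * (π:ℂ) * (Complex.I * ((v:ℂ) + 1/2)) * (n:ℂ))
        = Complex.exp (-(π : ℂ) * t * n ^ 2 + 2 * π * Complex.I * n * v)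
          * Complex.exp ((n:ℂ) * ((π:ℂ) * Complex.I)) := by
      rw [← Complex.exp_add]
      congr 1
      ring
    rw [e, Complex.exp_int_mul, Complex.exp_pi_mul_I, mul_comm]
  -- rewrite the Gaussian sum as a real sum
  set N : ℤ := ⌊v⌋ + 1 with hN
  have termeq : ∀ n : ℤ, Complex.exp (-(π:ℂ) / (t:ℂ) * ((n:ℂ)
        + Complex.I * (Complex.I * ((v:ℂ) + 1/2))) ^ 2)
      = ((Real.exp (-(π/t) * ((n:ℝ) - (v + 1/2))^2) : ℝ) : ℂ) := by
    intro n
    rw [Complex.ofReal_exp]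
    congr 1
    rw [← mul_assoc, Complex.I_mul_I]
    push_cast
    ring
  have reindex : ∑' n : ℤ, Real.exp (-(π/t) * ((n:ℝ) - (v + 1/2))^2) = ∑' k : ℤ,
      Real.exp (-(π/t) * ((k:ℝ) - w)^2) := by
    rw [← (Equiv.addLeft N).tsum_eq (fun n : ℤ => Real.exp (-(π/t) * ((n:ℝ) - (v + 1/2))^2))]
    refine tsum_congr fun k => ?_
    have hfr : Int.fract v = v - ⌊v⌋ := (Int.self_sub_floor v).symm
    have : ((N + k : ℤ) : ℝ) - (v + 1/2) = (k:ℝ) - w := by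
      simp only [hN, hwdef, hfr]
      push_cast
      ring
    simp only [Equiv.coe_addLeft, this]
  have hcpow : ((t:ℂ)) ^ (1/2 : ℂ) = ((Real.sqrt t : ℝ) : ℂ) := by
    rw [show (1/2 : ℂ) = ((1/2 : ℝ) : ℂ) by norm_num, ← Complex.ofReal_cpow ht.le,
      ← Real.sqrt_eq_rpow]
  have hsqrt_ne : (Real.sqrt t : ℂ) ≠ 0 := by
    simp only [ne_eq, Complex.ofReal_eq_zero]
    positivity
  -- put the analytic identity together
  have main : (Real.sqrt t : ℂ) * Real.exp (π * w ^ 2 / t) *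
          ∑' n : ℤ, (-1 : ℂ) ^ n *
            Complex.exp (-(π : ℂ) * t * n ^ 2 + 2 * π * Complex.I * n * v)
      = ((∑' k : ℤ, f k : ℝ) : ℂ) := by
    rw [mul_assoc, step1, step2, hcpow]
    have e1 : (∑' n : ℤ, Complex.exp (-(π:ℂ) / (t:ℂ) * ((n:ℂ)
          + Complex.I * (Complex.I * ((v:ℂ) + 1/2))) ^ 2))
        = ((∑' k : ℤ, Real.exp (-(π/t) * ((k:ℝ) - w)^2) : ℝ) : ℂ) := by
      rw [← reindex, Complex.ofReal_tsum]
      exact tsum_congr termeq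
    rw [e1]
    rw [show ((Real.exp (π * w ^ 2 / t) : ℝ) : ℂ) * (1 / (Real.sqrt t : ℂ) *
          ((∑' k : ℤ, Real.exp (-(π/t) * ((k:ℝ) - w)^2) : ℝ) : ℂ))
        = (1 / (Real.sqrt t : ℂ)) * (((Real.exp (π * w ^ 2 / t) : ℝ) : ℂ) *
          ((∑' k : ℤ, Real.exp (-(π/t) * ((k:ℝ) - w)^2) : ℝ) : ℂ)) by ring]
    rw [← mul_assoc, mul_one_div, div_self hsqrt_ne, one_mul]
    rw [← Complex.ofReal_mul]
    norm_cast
    rw [← tsum_mul_left]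
    refine tsum_congr fun k => ?_
    rw [← Real.exp_add]
    simp only [hfdef]
    congr 1
    field_simp
    ring
  refine ⟨((Tp + Tm : ℝ) : ℂ), ?_, ?_⟩
  · rw [main, htot]
    push_cast
    ring
  · rw [Complex.norm_real, Real.norm_eq_abs, _root_.abs_of_nonneg (by linarith)]
    have : c * (1-r)⁻¹ + c * (1-r)⁻¹ = 2 * c / (1 - r) := by ring
    rw [hcdef, hrdef] at this
    calc Tp + Tm ≤ c * (1-r)⁻¹ + c * (1-r)⁻¹ := add_le_add hTple hTmle
      _ = 2 * Real.exp (-2*π/t) / (1 - Real.exp (-π/a)) := this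
end

section
/- Let a > 0 and 0 < t < a, and let v ∈ ℝ with nearest-integer decomposition v = m_v + ⟦v⟧, ⟦v⟧ ∈ [-1/2,1/2). Then (-1)^{m_v} √t · e^{π⟦v⟧²/t} · θ₂(v | it) = 1 - 2e^{-π/t} cosh(2π⟦v⟧/t) + R, where |R| ≤ 2e^{-2π/t}/(1 - e^{-π/a}). -/
open Real Complex

theorem theta2_gaussian_approx (a t v : ℝ) (ha : 0 < a) (ht : 0 < t) (hta : t < a)
    (m : ℤ) (r : ℝ) (hr₁ : -(1/2) ≤ r) (hr₂ : r < 1/2) (hv : v = m + r) :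
    ∃ R : ℂ,
      ((-1 : ℂ) ^ m) * (Real.sqrt t : ℂ) * Real.exp (π * r ^ 2 / t) *
          ∑' n : ℤ, Complex.exp (-(π : ℂ) * t * (n + 1/2) ^ 2) *
            Complex.exp ((2 * n + 1) * π * Complex.I * v)
        = 1 - 2 * Real.exp (-π / t) * Real.cosh (2 * π * r / t) + R ∧
      ‖R‖ ≤ 2 * Real.exp (-2 * π / t) / (1 - Real.exp (-π / a)) := by
  have hπ := Real.pi_pos
  have ht0 : (t:ℂ) ≠ 0 := by exact_mod_cast ht.ne'
  have hτim : 0 < (Complex.I * (t:ℂ)).im := by simp [ht]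
  have hτ'im : 0 < (Complex.I / (t:ℂ)).im := by
    rw [show Complex.I / (t:ℂ) = Complex.I * ((t⁻¹ : ℝ) : ℂ) by push_cast; ring]
    simpa using inv_pos.mpr ht
  set F : ℤ → ℂ := fun n => (-1:ℂ)^n * (rexp (π*(2*n*r - n^2)/t) : ℂ) with hFdef
  have hFterm : ∀ n : ℤ, jacobiTheta₂_term n (1/2 - Complex.I * r / t) (Complex.I / t) = F n := by
    intro n
    rw [jacobiTheta₂_term, show 2 * ↑π * I * (n:ℂ) * (1/2 - Complex.I * r / t)
          + ↑π * I * (n:ℂ) ^ 2 * (Complex.I / t)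
        = ((n : ℂ) * (π * I)) + ((π*(2*n*r - n^2)/t : ℝ) : ℂ) by
      push_cast; field_simp; linear_combination ((n:ℂ)^2 - 2*(n:ℂ)*r) * Complex.I_sq,
      Complex.exp_add, Complex.exp_int_mul, Complex.exp_pi_mul_I]
    rw [hFdef]
    simp only
    norm_cast
  have hFsum : HasSum F (jacobiTheta₂ (1/2 - Complex.I * r / t) (Complex.I / t)) := by
    have h := hasSum_jacobiTheta₂_term (1/2 - Complex.I * r / t) hτ'im
    simpa only [hFterm] using h
  -- Step A : modular transformation
  have hA : ((-1 : ℂ) ^ m) * (Real.sqrt t : ℂ) * Real.exp (π * r ^ 2 / t) *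
          ∑' n : ℤ, Complex.exp (-(π : ℂ) * t * (n + 1/2) ^ 2) *
            Complex.exp ((2 * n + 1) * π * Complex.I * v)
      = jacobiTheta₂ (1/2 - Complex.I * r / t) (Complex.I / t) := by
    have hterm : ∀ n : ℤ, Complex.exp (-(π : ℂ) * t * (n + 1/2) ^ 2) *
          Complex.exp ((2 * n + 1) * π * Complex.I * v)
        = ((-1:ℂ)^m * cexp (↑π * I * (Complex.I * ↑t) / 4 + ↑π * I * ↑r)) *
            jacobiTheta₂_term n ((r:ℂ) + (Complex.I * ↑t)/2) (Complex.I * ↑t) := by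
      intro n
      rw [jacobiTheta₂_term, ← Complex.exp_add,
        show (-(π : ℂ) * t * (n + 1/2) ^ 2) + ((2 * n + 1) * π * Complex.I * v)
          = ((((2*n+1)*m : ℤ) : ℂ) * (π * I)) + ((↑π * I * (Complex.I * ↑t) / 4 + ↑π * I * ↑r)
              + (2 * ↑π * I * (n:ℂ) * ((r:ℂ) + (Complex.I * ↑t)/2) + ↑π * I * (n:ℂ) ^ 2 * (Complex.I * ↑t))) by
          rw [hv]; push_cast; linear_combination (-(π:ℂ)*t*((n:ℂ)+1/2)^2) * Complex.I_sq,
        Complex.exp_add, Complex.exp_add,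
        show cexp ((((2*n+1)*m : ℤ) : ℂ) * (π * I)) = (-1:ℂ)^m by
          rw [Complex.exp_int_mul, Complex.exp_pi_mul_I]
          rcases Int.even_or_odd m with h | h
          · rw [h.neg_one_zpow, (h.mul_left _).neg_one_zpow]
          · rw [h.neg_one_zpow, ((odd_two_mul_add_one n).mul h).neg_one_zpow]]
      ring
    rw [tsum_congr hterm, tsum_mul_left,
      (hasSum_jacobiTheta₂_term ((r:ℂ) + (Complex.I * ↑t)/2) hτim).tsum_eq,
      jacobiTheta₂_functional_equation,
      show (-I * (Complex.I * (t:ℂ))) ^ (1/2 : ℂ) = (Real.sqrt t : ℂ) by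
        rw [show -I * (Complex.I * (t:ℂ)) = (t:ℂ) by linear_combination (-(t:ℂ)) * Complex.I_sq,
          show ((1:ℂ)/2) = ((1/2 : ℝ) : ℂ) by norm_num, ← Complex.ofReal_cpow ht.le,
          Real.sqrt_eq_rpow],
      show ((r:ℂ) + (Complex.I * ↑t)/2) / (Complex.I * ↑t) = 1/2 - Complex.I * r / t by
        rw [div_eq_iff (by simp [Complex.I_ne_zero, ht0])]
        field_simp
        linear_combination (2*(r:ℂ)) * Complex.I_sq,
      show -1 / (Complex.I * (t:ℂ)) = Complex.I / t by
        rw [div_eq_div_iff (by simp [Complex.I_ne_zero, ht0]) ht0]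
        linear_combination (-(t:ℂ)) * Complex.I_sq]
    have hst0 : (Real.sqrt t : ℂ) ≠ 0 := by
      exact_mod_cast (Real.sqrt_pos.mpr ht).ne'
    have hm2 : ((-1:ℂ)^m) * ((-1:ℂ)^m) = 1 := by
      rw [← zpow_add₀ (by norm_num : (-1:ℂ) ≠ 0)]
      exact Even.neg_one_zpow ⟨m, rfl⟩
    have hone : (Real.exp (π * r ^ 2 / t) : ℂ) *
        (cexp (↑π * I * (Complex.I * ↑t) / 4 + ↑π * I * ↑r) *
          cexp (-↑π * I * ((r:ℂ) + (Complex.I * ↑t)/2) ^ 2 / (Complex.I * ↑t))) = 1 := by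
      rw [Complex.ofReal_exp, ← Complex.exp_add, ← Complex.exp_add,
        show ((π * r ^ 2 / t : ℝ) : ℂ) + (↑π * I * (Complex.I * ↑t) / 4 + ↑π * I * ↑r
            + -↑π * I * ((r:ℂ) + (Complex.I * ↑t)/2) ^ 2 / (Complex.I * ↑t)) = 0 by
          have hI : Complex.I * (t:ℂ) ≠ 0 := by simp [Complex.I_ne_zero, ht0]
          push_cast
          field_simp
          ring_nf,
        Complex.exp_zero]
    calc ((-1 : ℂ) ^ m) * (Real.sqrt t : ℂ) * Real.exp (π * r ^ 2 / t) *
          ((-1:ℂ)^m * cexp (↑π * I * (Complex.I * ↑t) / 4 + ↑π * I * ↑r) *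
            (1 / (Real.sqrt t : ℂ) * cexp (-↑π * I * ((r:ℂ) + (Complex.I * ↑t)/2) ^ 2 / (Complex.I * ↑t)) *
              jacobiTheta₂ (1/2 - Complex.I * r / t) (Complex.I / t)))
        = (((-1:ℂ)^m) * ((-1:ℂ)^m)) * ((Real.sqrt t : ℂ) / (Real.sqrt t : ℂ)) *
            ((Real.exp (π * r ^ 2 / t) : ℂ) *
              (cexp (↑π * I * (Complex.I * ↑t) / 4 + ↑π * I * ↑r) *
                cexp (-↑π * I * ((r:ℂ) + (Complex.I * ↑t)/2) ^ 2 / (Complex.I * ↑t)))) *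
            jacobiTheta₂ (1/2 - Complex.I * r / t) (Complex.I / t) := by ring
      _ = _ := by rw [hm2, div_self hst0, hone]; ring
  -- Step B : splitting off the three central terms
  set s : Finset ℤ := {0, 1, -1} with hsdef
  set G : ℤ → ℂ := fun n => if n ∈ s then 0 else F n with hGdef
  set q : ℝ := rexp (-2*π/t) with hqdef
  set c : ℝ := rexp (-π/a) with hcdef
  have hc0 : 0 ≤ c := (Real.exp_pos _).le
  have hc1 : c < 1 := Real.exp_lt_one_iff.mpr (by rw [neg_div, neg_lt_zero]; positivity)
  set H : ℤ → ℝ := fun n => if n ∈ s then 0 else q * c ^ (n.natAbs - 2) with hHdef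
  have hq0 : 0 < q := Real.exp_pos _
  have hHs : HasSum H (q * (1-c)⁻¹ + q * (1-c)⁻¹) := by
    apply HasSum.of_nat_of_neg_add_one
    · have base : HasSum (fun n:ℕ => H ((n:ℤ) + 2)) (q * (1-c)⁻¹) := by
        refine HasSum.congr_fun ((hasSum_geometric_of_lt_one hc0 hc1).mul_left q) fun n => ?_
        have hns : ((n:ℤ) + 2) ∉ s := by simp [hsdef]; omega
        have : ((n:ℤ) + 2).natAbs - 2 = n := by omega
        rw [hHdef]; simp only [if_neg hns, this]
      have := (hasSum_nat_add_iff (f := fun n:ℕ => H n) 2).mp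
        (base.congr_fun fun n => by push_cast; ring_nf)
      simpa [Finset.sum_range_succ, hHdef, hsdef] using this
    · have base : HasSum (fun n:ℕ => H (-((n:ℤ) + 2))) (q * (1-c)⁻¹) := by
        refine HasSum.congr_fun ((hasSum_geometric_of_lt_one hc0 hc1).mul_left q) fun n => ?_
        have hns : (-((n:ℤ) + 2)) ∉ s := by simp [hsdef]; omega
        have : (-((n:ℤ) + 2)).natAbs - 2 = n := by omega
        rw [hHdef]; simp only [if_neg hns, this]
      have := (hasSum_nat_add_iff (f := fun n:ℕ => H (-((n:ℤ) + 1))) 1).mp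
        (base.congr_fun fun n => by push_cast; ring_nf)
      simpa [Finset.sum_range_succ, hHdef, hsdef] using this
  have hbound : ∀ n : ℤ, ‖G n‖ ≤ H n := by
    intro n
    by_cases hn : n ∈ s
    · simp [hGdef, hHdef, hn]
    · rw [hGdef, hHdef]
      simp only [if_neg hn]
      have hk2 : 2 ≤ n.natAbs := by
        simp [hsdef] at hn; omega
      rw [hFdef]
      simp only
      rw [norm_mul, norm_zpow, norm_neg, norm_one, one_zpow, one_mul,
        Complex.norm_real, Real.norm_eq_abs, Real.abs_exp, hqdef, hcdef,
        ← Real.exp_nat_mul, ← Real.exp_add, Real.exp_le_exp]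
      set K : ℝ := (n.natAbs : ℝ) with hKdef
      have hK2 : (2:ℝ) ≤ K := by rw [hKdef]; exact_mod_cast hk2
      have hcast : ((n.natAbs - 2 : ℕ) : ℝ) = K - 2 := by
        rw [hKdef]; push_cast [Nat.cast_sub hk2]; ring
      have habs : |(n:ℝ)| = K := by
        rw [hKdef, Nat.cast_natAbs, Int.cast_abs]
      have h2nr : 2*(n:ℝ)*r ≤ K := by
        have h1 : (n:ℝ)*r ≤ |(n:ℝ)| * |r| := by
          calc (n:ℝ)*r ≤ |(n:ℝ)*r| := le_abs_self _
            _ = |(n:ℝ)| * |r| := abs_mul _ _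
        have h2 : |r| ≤ 1/2 := abs_le.mpr ⟨by linarith, by linarith⟩
        have h3 : |(n:ℝ)| * |r| ≤ K * (1/2) := by
          rw [habs]
          exact mul_le_mul_of_nonneg_left h2 (by linarith)
        linarith
      have hn2 : ((n:ℝ))^2 = K^2 := by rw [← _root_.sq_abs ((n:ℝ)), habs]
      rw [hcast]
      have hu1 : t/a ≤ 1 := (div_le_one ha).mpr hta.le
      have hu0 : 0 ≤ t/a := by positivity
      have key : 2*(n:ℝ)*r - (n:ℝ)^2 ≤ -(2:ℝ) - (K-2)*(t/a) := by
        nlinarith [mul_nonneg (by linarith : (0:ℝ) ≤ K - 2) (by linarith : (0:ℝ) ≤ 1 - t/a),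
          mul_nonneg (by linarith : (0:ℝ) ≤ K - 2) (by linarith : (0:ℝ) ≤ K)]
      have hmul := mul_le_mul_of_nonneg_left key (le_of_lt (div_pos hπ ht))
      calc π*(2*(n:ℝ)*r - (n:ℝ)^2)/t = π/t * (2*(n:ℝ)*r - (n:ℝ)^2) := by ring
        _ ≤ π/t * (-(2:ℝ) - (K-2)*(t/a)) := hmul
        _ = -2*π/t + (K - 2) * (-π/a) := by field_simp; ring
  have hGsummable : Summable G := Summable.of_norm_bounded hHs.summable hbound
  have hFisummable : Summable (fun n => if n ∈ s then F n else 0) :=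
    summable_of_ne_finset_zero (s := s) (fun b hb => if_neg hb)
  have hsplit : F = fun n => (if n ∈ s then F n else 0) + G n := by
    funext n
    by_cases hn : n ∈ s <;> simp [hGdef, hn]
  have htsum_split : jacobiTheta₂ (1/2 - Complex.I * r / t) (Complex.I / t)
      = (F 0 + F 1 + F (-1)) + ∑' n, G n := by
    have step1 : ∑' n, F n = (∑ b ∈ s, if b ∈ s then F b else 0) + ∑' n, G n := by
      calc ∑' n, F n = ∑' n, ((if n ∈ s then F n else 0) + G n) :=
            tsum_congr (fun n => by by_cases hn : n ∈ s <;> simp [hGdef, hn])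
        _ = (∑' n, if n ∈ s then F n else 0) + ∑' n, G n := Summable.tsum_add hFisummable hGsummable
        _ = _ := by
            rw [tsum_eq_sum (s := s) (f := fun n => if n ∈ s then F n else 0)
              (fun b hb => if_neg hb)]
    have step2 : (∑ b ∈ s, if b ∈ s then F b else 0) = F 0 + F 1 + F (-1) := by
      rw [show s = insert (0:ℤ) (insert 1 {-1}) from hsdef,
        Finset.sum_insert (by decide), Finset.sum_insert (by decide), Finset.sum_singleton]
      norm_num [hsdef]
      ring
    rw [← hFsum.tsum_eq, step1, step2]
  have hcenter : F 0 + F 1 + F (-1)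
      = 1 - 2 * (rexp (-π/t) : ℂ) * (Real.cosh (2*π*r/t) : ℂ) := by
    have h1 : rexp (π*(2*((1:ℤ):ℝ)*r - ((1:ℤ):ℝ)^2)/t)
        + rexp (π*(2*(((-1):ℤ):ℝ)*r - (((-1):ℤ):ℝ)^2)/t)
        = 2*rexp (-π/t)*Real.cosh (2*π*r/t) := by
      push_cast
      rw [Real.cosh_eq,
        show π*(2*1*r - 1^2)/t = (2*π*r/t) + (-π/t) by ring,
        show π*(2*(-1)*r - (-1:ℝ)^2)/t = (-(2*π*r/t)) + (-π/t) by ring,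
        Real.exp_add, Real.exp_add]
      ring
    rw [hFdef]
    simp only
    rw [zpow_zero, zpow_one, zpow_neg_one, inv_neg_one,
      show π*(2*((0:ℤ):ℝ)*r - ((0:ℤ):ℝ)^2)/t = 0 by push_cast; ring, Real.exp_zero,
      show (1 - 2 * (rexp (-π/t) : ℂ) * (Real.cosh (2*π*r/t) : ℂ))
        = ((1 - 2*rexp (-π/t)*Real.cosh (2*π*r/t) : ℝ) : ℂ) by
          push_cast [-Complex.ofReal_exp, -Complex.ofReal_cosh]; ring,
      ← h1]
    push_cast [-Complex.ofReal_exp]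
    ring
  refine ⟨∑' n, G n, ?_, ?_⟩
  · rw [hA, htsum_split, hcenter]
  · calc ‖∑' n, G n‖ ≤ q * (1-c)⁻¹ + q * (1-c)⁻¹ := tsum_of_norm_bounded hHs hbound
      _ = 2 * rexp (-2*π/t) / (1 - rexp (-π/a)) := by
        rw [hqdef, hcdef]; ring
end

section
/- Let C > 0, and let x ∈ ℝ with |x| ≤ C. Let 0 < ε < min(1, 2C) and 0 < t < ε²/(4π²C²). Then √t · θ₃(√t·x | it) = e^{-πx²}(1 + R) with |R| ≤ ((4 - 2e^{-π})/(1 - e^{-π})) · e^{-(π-ε)/t}. -/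
open Real Complex

set_option maxHeartbeats 1000000

theorem theta3_normal_limit (C x ε t : ℝ) (hC : 0 < C) (hx : |x| ≤ C)
    (hε₁ : 0 < ε) (hε₂ : ε < min 1 (2 * C))
    (ht : 0 < t) (ht' : t < ε ^ 2 / (4 * π ^ 2 * C ^ 2)) :
    ∃ R : ℂ,
      (Real.sqrt t : ℂ) *
          ∑' n : ℤ, Complex.exp (-(π : ℂ) * t * n ^ 2 +
            2 * π * Complex.I * n * (Real.sqrt t * x))
        = Real.exp (-π * x ^ 2) * (1 + R) ∧
      ‖R‖ ≤ (4 - 2 * Real.exp (-π)) / (1 - Real.exp (-π)) *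
        Real.exp (-(π - ε) / t) := by
  have hπ := Real.pi_pos
  have hπ3 := Real.pi_gt_three
  obtain ⟨s, hs_def⟩ : ∃ s : ℝ, s = Real.sqrt t := ⟨_, rfl⟩
  rw [← hs_def]
  have hs : 0 < s := hs_def ▸ Real.sqrt_pos.mpr ht
  have hs2 : s ^ 2 = t := hs_def ▸ Real.sq_sqrt ht.le
  have hε1 : ε < 1 := lt_of_lt_of_le hε₂ (min_le_left _ _)
  have hεC : ε < 2 * C := lt_of_lt_of_le hε₂ (min_le_right _ _)
  -- basic bounds
  have hsε : 2 * π * C * s ≤ ε := by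
    have h2 : (0:ℝ) < ε / (2 * π * C) := by positivity
    have h1 : s ^ 2 < (ε / (2 * π * C)) ^ 2 := by
      rw [hs2, div_pow]
      convert ht' using 2 <;> ring
    have hslt : s < ε / (2 * π * C) := lt_of_pow_lt_pow_left₀ 2 h2.le h1
    have := (lt_div_iff₀ (by positivity : (0:ℝ) < 2 * π * C)).mp hslt
    linarith
  have htπ : π * t ≤ π - ε := by
    have hε4C : ε ^ 2 < 4 * C ^ 2 := by nlinarith
    have h1 : t < 1 / π ^ 2 := by
      calc t < ε ^ 2 / (4 * π ^ 2 * C ^ 2) := ht'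
        _ < (4 * C ^ 2) / (4 * π ^ 2 * C ^ 2) := by gcongr
        _ = 1 / π ^ 2 := by
          rw [div_eq_div_iff (by positivity) (by positivity)]
          ring
    have h2' : π * t < π * (1 / π ^ 2) := mul_lt_mul_of_pos_left h1 hπ
    have h3 : π * (1 / π ^ 2) = 1 / π := by
      field_simp
    have h4 : 1 / π < 1 := by rw [div_lt_one hπ]; linarith
    linarith
  -- cast facts
  have hsC : ((s:ℂ)) ≠ 0 := by exact_mod_cast hs.ne'
  have htC : ((t:ℂ)) ≠ 0 := by exact_mod_cast ht.ne'
  have hs2C : ((s:ℂ)) ^ 2 = (t:ℂ) := by exact_mod_cast hs2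
  -- the theta variables after the functional equation
  obtain ⟨z', hz'⟩ : ∃ z' : ℂ, z' = ((-(x / s) : ℝ) : ℂ) * I := ⟨_, rfl⟩
  obtain ⟨τ', hτ'⟩ : ∃ τ' : ℂ, τ' = ((1 / t : ℝ) : ℂ) * I := ⟨_, rfl⟩
  have hτ'im : 0 < τ'.im := by
    rw [hτ', mul_I_im, ofReal_re]
    positivity
  -- Step A: identify the sum with jacobiTheta₂
  have hA : (∑' n : ℤ, Complex.exp (-(π : ℂ) * t * n ^ 2 +
      2 * π * Complex.I * n * (s * x))) = jacobiTheta₂ ((s:ℂ) * x) ((t:ℂ) * I) := by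
    unfold jacobiTheta₂ jacobiTheta₂_term
    refine tsum_congr fun n => ?_
    congr 1
    linear_combination (-(π:ℂ) * (t:ℂ) * (n:ℂ) ^ 2) * I_sq
  -- Step B: functional equation
  have hfe : jacobiTheta₂ ((s:ℂ) * x) ((t:ℂ) * I)
      = (1 / (s:ℂ)) * Complex.exp (-(π:ℂ) * x ^ 2) * jacobiTheta₂ z' τ' := by
    rw [jacobiTheta₂_functional_equation]
    have e1 : -I * ((t:ℂ) * I) = (t:ℂ) := by
      linear_combination (-(t:ℂ)) * I_sq
    have e2 : ((t:ℂ)) ^ (1/2 : ℂ) = (s:ℂ) := by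
      rw [show ((1:ℂ)/2) = ((1/2 : ℝ) : ℂ) by norm_num, ← Complex.ofReal_cpow ht.le,
        ← Real.sqrt_eq_rpow, ← hs_def]
    have e3 : -(π:ℂ) * I * ((s:ℂ) * x) ^ 2 / ((t:ℂ) * I) = -(π:ℂ) * x ^ 2 := by
      rw [div_eq_iff (mul_ne_zero htC I_ne_zero)]
      linear_combination (-(π:ℂ)) * I * (x:ℂ) ^ 2 * hs2C
    have e4 : ((s:ℂ) * x) / ((t:ℂ) * I) = z' := by
      rw [hz']
      push_cast
      field_simp
      linear_combination (x:ℂ) * hs2C + (x:ℂ) * (t:ℂ) * I_sq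
    have e5 : (-1 : ℂ) / ((t:ℂ) * I) = τ' := by
      rw [hτ']
      push_cast
      field_simp
      linear_combination -I_sq
    rw [e1, e2, e3, e4, e5]
  -- sum of theta terms at (z', τ')
  have hf : HasSum (fun n : ℤ => jacobiTheta₂_term n z' τ') (jacobiTheta₂ z' τ') :=
    hasSum_jacobiTheta₂_term z' hτ'im
  have hf0 : jacobiTheta₂_term 0 z' τ' = 1 := by
    simp [jacobiTheta₂_term]
  refine ⟨jacobiTheta₂ z' τ' - 1, ?_, ?_⟩
  · -- the main identity
    rw [hA, hfe]
    rw [show -(π:ℂ) * x ^ 2 = (((-π * x ^ 2 : ℝ)):ℂ) by push_cast; ring, ← Complex.ofReal_exp]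
    field_simp
    ring
  · -- the error bound
    obtain ⟨r, hr_def⟩ : ∃ r : ℝ, r = Real.exp (-(π - ε) / t) := ⟨_, rfl⟩
    rw [← hr_def]
    have hr0 : 0 < r := hr_def ▸ Real.exp_pos _
    obtain ⟨E, hE_def⟩ : ∃ E : ℝ, E = Real.exp (-π) := ⟨_, rfl⟩
    rw [← hE_def]
    have hE0 : 0 < E := hE_def ▸ Real.exp_pos _
    have hrE : r ≤ E := by
      have h' : π ≤ (π - ε) / t := by rw [le_div_iff₀ ht]; linarith
      rw [hr_def, hE_def, Real.exp_le_exp, neg_div]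
      linarith
    have hE1 : E < 1 := by
      rw [hE_def, Real.exp_lt_one_iff]
      linarith
    have hr1 : r < 1 := lt_of_le_of_lt hrE hE1
    have h1r : 0 < 1 - r := by linarith
    have h1E : 0 < 1 - E := by linarith
    -- termwise bound
    have hterm : ∀ n : ℤ, n ≠ 0 → ‖jacobiTheta₂_term n z' τ'‖ ≤ r ^ n.natAbs := by
      intro n hn
      rw [norm_jacobiTheta₂_term, hr_def, ← Real.exp_nat_mul, Real.exp_le_exp]
      rw [hz', hτ', mul_I_im, mul_I_im, ofReal_re, ofReal_re]
      have hN1 : 1 ≤ (n.natAbs : ℝ) := by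
        exact_mod_cast Nat.one_le_iff_ne_zero.mpr (Int.natAbs_ne_zero.mpr hn)
      have hNabs : |(n:ℝ)| = (n.natAbs : ℝ) := by
        rw [Nat.cast_natAbs, Int.cast_abs]
      have hn2 : (n:ℝ) ^ 2 = (n.natAbs : ℝ) ^ 2 := by rw [← _root_.sq_abs, hNabs]
      have h1 : (n:ℝ) * x ≤ (n.natAbs : ℝ) * C := by
        calc (n:ℝ) * x ≤ |(n:ℝ) * x| := le_abs_self _
          _ = |(n:ℝ)| * |x| := abs_mul _ _
          _ ≤ (n.natAbs : ℝ) * C := by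
            rw [hNabs]; exact mul_le_mul_of_nonneg_left hx (by linarith)
      have hxs : x / s = x * s / t := by
        rw [← hs2, sq, mul_div_mul_right _ _ hs.ne']
      have key0 : -π * (n:ℝ) ^ 2 + 2 * π * ((n:ℝ) * x) * s
          ≤ -(π - ε) * (n.natAbs : ℝ) := by
        have h23 : 2 * π * ((n:ℝ) * x) * s ≤ ε * (n.natAbs : ℝ) := by
          nlinarith [mul_le_mul_of_nonneg_right h1 (by positivity : (0:ℝ) ≤ 2 * π * s),
            mul_le_mul_of_nonneg_left hsε (by linarith : (0:ℝ) ≤ (n.natAbs : ℝ))]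
        have h4 : (n.natAbs : ℝ) ≤ (n.natAbs : ℝ) ^ 2 := by nlinarith [hN1]
        have h5 : π * (n.natAbs : ℝ) ≤ π * (n.natAbs : ℝ) ^ 2 :=
          mul_le_mul_of_nonneg_left h4 hπ.le
        rw [hn2]
        linarith [h23, h5]
      calc -π * (n:ℝ) ^ 2 * (1 / t) - 2 * π * (n:ℝ) * -(x / s)
          = (-π * (n:ℝ) ^ 2 + 2 * π * ((n:ℝ) * x) * s) / t := by
            rw [hxs]; ring
        _ ≤ (-(π - ε) * (n.natAbs : ℝ)) / t := by gcongr
        _ = (n.natAbs : ℝ) * (-(π - ε) / t) := by ring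
    -- sums
    have hfu_sum : HasSum (Function.update (fun n : ℤ => jacobiTheta₂_term n z' τ') 0 0)
        (jacobiTheta₂ z' τ' - 1) := by
      have h := hf.update 0 0
      rw [hf0] at h
      convert h using 1
      · rfl
      ring
    obtain ⟨g, hg⟩ : ∃ g : ℤ → ℝ, g = fun n => if n = 0 then 0 else r ^ n.natAbs := ⟨_, rfl⟩
    have hbound : ∀ n : ℤ,
        ‖Function.update (fun n : ℤ => jacobiTheta₂_term n z' τ') 0 0 n‖ ≤ g n := by
      intro n
      by_cases hn : n = 0
      · subst hn
        simp [hg]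
      · rw [Function.update_of_ne hn, hg]
        simp only [hn, if_false]
        exact hterm n hn
    have hgeo : HasSum (fun n : ℕ => r ^ n) (1 - r)⁻¹ :=
      hasSum_geometric_of_lt_one hr0.le hr1
    have h1' : HasSum (fun n : ℕ => r ^ (n + 1)) ((1 - r)⁻¹ - 1) := by
      have := (hasSum_nat_add_iff' (f := fun n : ℕ => r ^ n) 1).mpr hgeo
      simpa using this
    have hpos : HasSum (fun n : ℕ => g (n : ℤ)) ((1 - r)⁻¹ - 1) := by
      refine (hasSum_nat_add_iff' (f := fun n : ℕ => g (n : ℤ)) 1).mp ?_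
      have heq : (fun n : ℕ => g ((n + 1 : ℕ) : ℤ)) = fun n : ℕ => r ^ (n + 1) := by
        funext n
        rw [hg]
        simp only
        rw [if_neg (by exact_mod_cast Nat.succ_ne_zero n)]
        congr 1 <;> omega
      rw [heq]
      convert h1' using 1
      · rfl
      rw [hg]
      simp
    have hneg : HasSum (fun n : ℕ => g (-((n : ℤ) + 1))) ((1 - r)⁻¹ - 1) := by
      have heq : (fun n : ℕ => g (-((n : ℤ) + 1))) = fun n : ℕ => r ^ (n + 1) := by
        funext n
        rw [hg]
        simp only
        rw [if_neg (by omega)]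
        congr 1 <;> omega
      rw [heq]
      exact h1'
    have hgsum : HasSum g (((1 - r)⁻¹ - 1) + ((1 - r)⁻¹ - 1)) :=
      HasSum.of_nat_of_neg_add_one hpos hneg
    have hfu_norm : Summable fun n =>
        ‖Function.update (fun n : ℤ => jacobiTheta₂_term n z' τ') 0 0 n‖ :=
      Summable.of_nonneg_of_le (fun n => norm_nonneg _) hbound hgsum.summable
    have hmain : ‖jacobiTheta₂ z' τ' - 1‖ ≤ ((1 - r)⁻¹ - 1) + ((1 - r)⁻¹ - 1) := by
      rw [← hfu_sum.tsum_eq]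
      calc ‖∑' n, Function.update (fun n : ℤ => jacobiTheta₂_term n z' τ') 0 0 n‖
          ≤ ∑' n, ‖Function.update (fun n : ℤ => jacobiTheta₂_term n z' τ') 0 0 n‖ :=
            norm_tsum_le_tsum_norm hfu_norm
        _ ≤ ∑' n, g n := Summable.tsum_le_tsum hbound hfu_norm hgsum.summable
        _ = _ := hgsum.tsum_eq
    refine hmain.trans ?_
    have e6 : ((1 - r)⁻¹ - 1) + ((1 - r)⁻¹ - 1) = 2 * r * (1 - r)⁻¹ := by
      field_simp
      ring
    rw [e6]
    calc 2 * r * (1 - r)⁻¹ ≤ 2 * r * (1 - E)⁻¹ := by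
          gcongr
      _ = 2 * r / (1 - E) := by ring
      _ ≤ (4 - 2 * E) * r / (1 - E) := by
          gcongr
          nlinarith
      _ = (4 - 2 * E) / (1 - E) * r := by ring
end

section
/- Let C > 0, and let x ∈ ℝ with |x| ≤ C. Let 0 < ε < min(1, 2C) and 0 < t < ε²/(4π²C²). Then √t · θ₂(√t·x | it) = e^{-πx²}(1 + R) with |R| ≤ ((4 - 2e^{-π})/(1 - e^{-π})) · e^{-(π-ε)/t}. -/
open Real Complex

set_option maxHeartbeats 1000000 in
lemma theta2_tail_bound (F : ℤ → ℂ) (A r : ℝ) (hA0 : 0 ≤ A) (hr0 : 0 < r) (hr1 : r < 1)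
    (key : ∀ k : ℤ, k ≠ 0 → ‖F k‖ ≤ A * r ^ (k.natAbs - 1)) :
    ‖∑' k : ℤ, (if k = 0 then 0 else F k)‖ ≤ 2 * (A * (1 - r)⁻¹) := by
  set h : ℤ → ℂ := fun k => if k = 0 then 0 else F k with hhdef
  have hnorm_le : ∀ k : ℤ, ‖h k‖ ≤ A * r ^ (k.natAbs - 1) := by
    intro k
    by_cases hk : k = 0
    · simp only [hhdef, hk, if_true, norm_zero]
      positivity
    · simp only [hhdef, hk, if_false]
      exact key k hk
  have hgeo : Summable (fun n : ℕ => r ^ n) := summable_geometric_of_lt_one hr0.le hr1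
  have hgeoA : Summable (fun n : ℕ => A * r ^ n) := hgeo.mul_left A
  have hM1 : Summable (fun n : ℕ => A * r ^ (n - 1)) := by
    apply (summable_nat_add_iff 1).1
    refine (summable_congr (fun n : ℕ => ?_)).2 hgeoA
    rw [Nat.add_sub_cancel]
  have hMsum : Summable (fun k : ℤ => A * r ^ (k.natAbs - 1)) := by
    apply Summable.of_nat_of_neg_add_one
    · refine (summable_congr (fun n : ℕ => ?_)).2 hM1
      rw [Int.natAbs_natCast]
    · refine (summable_congr (fun n : ℕ => ?_)).2 hgeoA
      have hn : ((-((n:ℤ)+1)).natAbs) = n + 1 := by omega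
      rw [hn, Nat.add_sub_cancel]
  have hnormsum : Summable (fun k : ℤ => ‖h k‖) :=
    Summable.of_nonneg_of_le (fun k => norm_nonneg _) hnorm_le hMsum
  have hs₁ : Summable (fun n : ℕ => ‖h ((n : ℤ))‖) :=
    hnormsum.comp_injective (fun a b hab => by exact_mod_cast hab)
  have hs₂ : Summable (fun n : ℕ => ‖h (-((n : ℤ) + 1))‖) :=
    hnormsum.comp_injective (fun a b hab => by omega)
  have hsumgeoA : (∑' n : ℕ, A * r ^ n) = A * (1 - r)⁻¹ := by
    rw [tsum_mul_left, tsum_geometric_of_lt_one hr0.le hr1]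
  have p2 : (∑' n : ℕ, ‖h (-((n : ℤ) + 1))‖) ≤ A * (1 - r)⁻¹ := by
    rw [← hsumgeoA]
    refine hs₂.tsum_le_tsum (fun n => ?_) hgeoA
    have hb := hnorm_le (-((n : ℤ) + 1))
    have hn : ((-((n:ℤ)+1)).natAbs - 1) = n := by omega
    rwa [hn] at hb
  have p1 : (∑' n : ℕ, ‖h ((n : ℤ))‖) ≤ A * (1 - r)⁻¹ := by
    rw [Summable.tsum_eq_zero_add hs₁]
    have hz : ‖h ((0 : ℕ) : ℤ)‖ = 0 := by
      simp [hhdef]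
    rw [hz, zero_add, ← hsumgeoA]
    refine ((summable_nat_add_iff 1).2 hs₁).tsum_le_tsum (fun n => ?_) hgeoA
    have hb := hnorm_le (((n + 1 : ℕ) : ℤ))
    have hn : ((((n + 1 : ℕ) : ℤ)).natAbs - 1) = n := by omega
    rwa [hn] at hb
  calc ‖∑' k : ℤ, h k‖ = ‖∑' k : ℤ, h k‖ := rfl
    _ ≤ ∑' k : ℤ, ‖h k‖ := norm_tsum_le_tsum_norm hnormsum
    _ = (∑' n : ℕ, ‖h ((n : ℤ))‖) + ∑' n : ℕ, ‖h (-((n : ℤ) + 1))‖ :=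
        tsum_of_nat_of_neg_add_one hs₁ hs₂
    _ ≤ A * (1 - r)⁻¹ + A * (1 - r)⁻¹ := add_le_add p1 p2
    _ = 2 * (A * (1 - r)⁻¹) := by ring


set_option maxHeartbeats 2000000 in
theorem theta2_normal_limit (C x ε t : ℝ) (hC : 0 < C) (hx : |x| ≤ C)
    (hε₁ : 0 < ε) (hε₂ : ε < min 1 (2 * C))
    (ht : 0 < t) (ht' : t < ε ^ 2 / (4 * π ^ 2 * C ^ 2)) :
    ∃ R : ℂ,
      (Real.sqrt t : ℂ) *
          ∑' n : ℤ, Complex.exp (-(π : ℂ) * t * (n + 1/2) ^ 2) *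
            Complex.exp ((2 * n + 1) * π * Complex.I * (Real.sqrt t * x))
        = Real.exp (-π * x ^ 2) * (1 + R) ∧
      ‖R‖ ≤ (4 - 2 * Real.exp (-π)) / (1 - Real.exp (-π)) *
        Real.exp (-(π - ε) / t) := by
  have hπ3 : (3:ℝ) < π := Real.pi_gt_three
  have hε1 : ε < 1 := lt_of_lt_of_le hε₂ (min_le_left _ _)
  have hεC : ε < 2 * C := lt_of_lt_of_le hε₂ (min_le_right _ _)
  have hπε : 0 < π - ε := by linarith
  set s := Real.sqrt t with hsdef
  have hs : 0 < s := Real.sqrt_pos.2 ht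
  have hs2 : s ^ 2 = t := Real.sq_sqrt ht.le
  have hd : (0:ℝ) < 4 * π ^ 2 * C ^ 2 := by positivity
  have ht'' : t * (4 * π ^ 2 * C ^ 2) < ε ^ 2 := (lt_div_iff₀ hd).1 ht'
  have hε2' : ε ^ 2 < 4 * C ^ 2 := by nlinarith
  have ht1 : t < 1 := by
    have h4 : t * (4 * π ^ 2 * C ^ 2) < 4 * C ^ 2 := ht''.trans hε2'
    have hC2 : (0:ℝ) < C ^ 2 := by positivity
    nlinarith [mul_nonneg (mul_nonneg ht.le hC2.le) (by nlinarith : (0:ℝ) ≤ π ^ 2 - 9)]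
  have hsε : 2 * π * C * s < ε := by
    have hsq : (2 * π * C * s) ^ 2 < ε ^ 2 := by
      have : (2 * π * C * s) ^ 2 = t * (4 * π ^ 2 * C ^ 2) := by
        rw [mul_pow, mul_pow, mul_pow, hs2]; ring
      rw [this]; exact ht''
    exact lt_of_pow_lt_pow_left₀ 2 hε₁.le hsq
  set a : ℂ := ((t⁻¹ : ℝ) : ℂ) with hadef
  set b : ℂ := ((-(x / s) : ℝ) : ℂ) - I / 2 with hbdef
  have ha : 0 < a.re := by
    rw [hadef, Complex.ofReal_re]; positivity
  have hsc : (s:ℂ) ≠ 0 := Complex.ofReal_ne_zero.2 hs.ne'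
  have htc : (t:ℂ) = (s:ℂ) ^ 2 := by
    rw [← hs2]; push_cast; ring
  have hanez : a ≠ 0 := by
    rw [hadef]
    exact Complex.ofReal_ne_zero.2 (inv_ne_zero ht.ne')
  have ha' : -(π:ℂ) / a = -(π:ℂ) * t := by
    rw [hadef]; push_cast; field_simp
  have hIb : I * b = 1/2 - I * ((x / s : ℝ) : ℂ) := by
    rw [hbdef]; push_cast
    linear_combination (-(1:ℂ)/2) * Complex.I_sq
  -- termwise identity
  have hterm : ∀ n : ℤ,
      Complex.exp (-(π : ℂ) * t * (n + 1/2) ^ 2) *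
          Complex.exp ((2 * n + 1) * π * Complex.I * (s * x))
        = Complex.exp (-(π:ℂ) * x ^ 2) * Complex.exp (-(π:ℂ) / a * (n + I * b) ^ 2) := by
    intro n
    rw [← Complex.exp_add, ← Complex.exp_add]
    congr 1
    rw [ha', hIb, htc]
    push_cast
    field_simp
    linear_combination (4 * (x:ℂ) ^ 2) * Complex.I_sq
  have hsum1 : (∑' n : ℤ, Complex.exp (-(π : ℂ) * t * (n + 1/2) ^ 2) *
          Complex.exp ((2 * n + 1) * π * Complex.I * (s * x)))
      = Complex.exp (-(π:ℂ) * x ^ 2) * ∑' n : ℤ, Complex.exp (-(π:ℂ) / a * (n + I * b) ^ 2) := by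
    rw [← tsum_mul_left]
    exact tsum_congr hterm
  have hfe := Complex.tsum_exp_neg_quadratic ha b
  have hcpow : a ^ (1/2 : ℂ) = ((s⁻¹ : ℝ) : ℂ) := by
    rw [hadef, show ((1:ℂ)/2) = ((1/2 : ℝ) : ℂ) by norm_num,
      ← Complex.ofReal_cpow (by positivity) (1/2 : ℝ)]
    congr 1
    rw [Real.inv_rpow ht.le, ← Real.sqrt_eq_rpow]
  set f : ℤ → ℂ := fun k => Complex.exp (-(π:ℂ) * a * k ^ 2 + 2 * π * b * k) with hfdef
  have hT : (∑' k : ℤ, f k) = (s:ℂ) * ∑' n : ℤ, Complex.exp (-(π:ℂ) / a * (n + I * b) ^ 2) := by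
    rw [hfdef]
    simp only []
    rw [hfe, hcpow]
    congr 1
    push_cast
    field_simp
  refine ⟨(∑' k : ℤ, f k) - 1, ?_, ?_⟩
  · rw [hsum1]
    have hE : ((Real.exp (-π * x ^ 2) : ℝ) : ℂ) = Complex.exp (-(π:ℂ) * x ^ 2) := by
      rw [Complex.ofReal_exp]; congr 1; push_cast; ring
    rw [hE, hT]
    ring
  · -- the bound
    set A := Real.exp (-(π - ε) / t) with hAdef
    set r := Real.exp (-π) with hrdef
    have hr0 : 0 < r := Real.exp_pos _
    have hr1 : r < 1 := by
      rw [hrdef, Real.exp_lt_one_iff]; linarith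
    have hA0 : 0 < A := Real.exp_pos _
    have hA1 : A ≤ 1 := by
      rw [hAdef, Real.exp_le_one_iff, neg_div]
      exact neg_nonpos.2 (by positivity)
    -- norm of each term
    have hnorm : ∀ k : ℤ, ‖f k‖
        = Real.exp (-π * (k:ℝ) ^ 2 / t - 2 * π * (k:ℝ) * x / s) := by
      intro k
      have hfk : f k = Complex.exp (((-π * (k:ℝ) ^ 2 / t - 2 * π * (k:ℝ) * x / s : ℝ) : ℂ))
          * Complex.exp (((-(π * (k:ℝ)) : ℝ) : ℂ) * I) := by
        rw [hfdef]
        simp only []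
        rw [← Complex.exp_add]
        congr 1
        rw [hbdef, hadef]
        push_cast
        ring
      rw [hfk, norm_mul, Complex.norm_exp_ofReal, Complex.norm_exp_ofReal_mul_I, mul_one]
    -- key estimate for k ≠ 0
    have key : ∀ k : ℤ, k ≠ 0 → ‖f k‖ ≤ A * r ^ (k.natAbs - 1) := by
      intro k hk
      rw [hnorm k]
      set m : ℝ := (k.natAbs : ℝ) with hmdef
      have hm1 : (1:ℝ) ≤ m := by
        rw [hmdef]
        exact_mod_cast Nat.one_le_iff_ne_zero.2 (Int.natAbs_ne_zero.2 hk)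
      have habs : |(k:ℝ)| = m := by
        rw [hmdef, Nat.cast_natAbs]
        exact (Int.cast_abs).symm
      have hk2 : (k:ℝ) ^ 2 = m ^ 2 := by
        rw [← habs]; exact (_root_.sq_abs ((k:ℝ))).symm
      have hrpow : A * r ^ (k.natAbs - 1) = Real.exp (-(π - ε) / t - π * (m - 1)) := by
        rw [hAdef, hrdef, ← Real.exp_nat_mul, ← Real.exp_add]
        congr 1
        have : ((k.natAbs - 1 : ℕ) : ℝ) = m - 1 := by
          rw [hmdef]
          have : 1 ≤ k.natAbs := Nat.one_le_iff_ne_zero.2 (Int.natAbs_ne_zero.2 hk)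
          push_cast [Nat.cast_sub this]
          ring
        rw [this]; ring
      rw [hrpow, Real.exp_le_exp]
      -- real inequality
      have hkxs : -(2 * π * (k:ℝ) * x * s) ≤ ε * m := by
        have h1 : |(k:ℝ) * x| ≤ m * C := by
          rw [abs_mul, habs]
          exact mul_le_mul_of_nonneg_left hx (by linarith)
        have h2 : -((k:ℝ) * x) ≤ m * C := le_trans (neg_le_abs _) h1
        have hh1 : 2 * π * (-((k:ℝ) * x) * s) ≤ 2 * π * (m * C * s) := by
          apply mul_le_mul_of_nonneg_left (mul_le_mul_of_nonneg_right h2 hs.le)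
          positivity
        have hh2 : m * (2 * π * C * s) ≤ m * ε := mul_le_mul_of_nonneg_left hsε.le (by linarith)
        nlinarith [hh1, hh2]
      have e1 : -π * (k:ℝ) ^ 2 / t - 2 * π * (k:ℝ) * x / s
          = (-π * m ^ 2 - 2 * π * (k:ℝ) * x * s) / t := by
        rw [hk2, ← hs2]
        field_simp
      have e2 : -(π - ε) / t - π * (m - 1) = (-(π - ε) - π * (m - 1) * t) / t := by
        field_simp
      rw [e1, e2, div_le_div_iff_of_pos_right ht]
      nlinarith [mul_nonneg (by linarith : (0:ℝ) ≤ m - 1)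
        (by nlinarith : (0:ℝ) ≤ π * (m + 1) - ε - π * t)]
    -- summability of f
    have hsf : Summable f := by
      apply Summable.of_norm
      apply Summable.of_nat_of_neg_add_one
      · apply (summable_nat_add_iff 1).1
        apply Summable.of_nonneg_of_le (fun n => norm_nonneg _) _
          ((summable_geometric_of_lt_one hr0.le hr1).mul_left A)
        intro n
        have hn : (((n + 1 : ℕ) : ℤ)) ≠ 0 := by omega
        refine le_trans (key _ hn) ?_
        have hn2 : ((((n + 1 : ℕ) : ℤ)).natAbs - 1) = n := by omega
        rw [hn2]
      · apply Summable.of_nonneg_of_le (fun n => norm_nonneg _) _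
          ((summable_geometric_of_lt_one hr0.le hr1).mul_left A)
        intro n
        have hn : (-((n:ℤ)+1)) ≠ 0 := by omega
        refine le_trans (key _ hn) ?_
        have hn2 : ((-((n:ℤ)+1)).natAbs - 1) = n := by omega
        rw [hn2]
    have hf0 : f 0 = 1 := by simp [hfdef]
    have hsplit := Summable.tsum_eq_add_tsum_ite hsf 0
    rw [hf0] at hsplit
    have hRform : (∑' k : ℤ, f k) - 1 = ∑' k : ℤ, (if k = 0 then 0 else f k) := by
      rw [hsplit]; ring
    rw [hRform]
    refine le_trans (theta2_tail_bound f A r hA0.le hr0 hr1 key) ?_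
    have h1r : (0:ℝ) < (1 - r)⁻¹ := by
      rw [inv_pos]; linarith
    have hne : (1:ℝ) - r ≠ 0 := by linarith
    have hfinal : (4 - 2 * r) / (1 - r) = 2 * (1 - r)⁻¹ + 2 := by
      field_simp [hne]
      ring
    rw [hfinal]
    nlinarith [mul_nonneg hA0.le h1r.le]
end

section
/- Let C > 0, and let x ∈ ℝ with |x| ≤ C. Let 0 < ε < min(1, 2C) and 0 < t < ε²/(4π²C²). Then √t · θ₁(1/2 + √t·x | it) = e^{-πx²}(1 + R) with |R| ≤ ((4 - 2e^{-π})/(1 - e^{-π})) · e^{-(π-ε)/t}. -/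
open Real Complex

set_option maxHeartbeats 1000000 in
theorem theta1_normal_limit (C x ε t : ℝ) (hC : 0 < C) (hx : |x| ≤ C)
    (hε₁ : 0 < ε) (hε₂ : ε < min 1 (2 * C))
    (ht : 0 < t) (ht' : t < ε ^ 2 / (4 * π ^ 2 * C ^ 2)) :
    ∃ R : ℂ,
      (Real.sqrt t : ℂ) *
          (-Complex.I * ∑' n : ℤ, (-1 : ℂ) ^ n *
            Complex.exp (-(π : ℂ) * t * (n + 1/2) ^ 2) *
            Complex.exp ((2 * n + 1) * π * Complex.I * (1/2 + Real.sqrt t * x)))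
        = Real.exp (-π * x ^ 2) * (1 + R) ∧
      ‖R‖ ≤ (4 - 2 * Real.exp (-π)) / (1 - Real.exp (-π)) *
        Real.exp (-(π - ε) / t) := by
  have hπ : (0:ℝ) < π := Real.pi_pos
  have hε1 : ε < 1 := lt_of_lt_of_le hε₂ (min_le_left _ _)
  have hεC : ε < 2 * C := lt_of_lt_of_le hε₂ (min_le_right _ _)
  set s : ℝ := Real.sqrt t with hs_def
  have hs0 : 0 < s := Real.sqrt_pos.mpr ht
  have hss : s ^ 2 = t := Real.sq_sqrt ht.le
  have ht0 : (t:ℂ) ≠ 0 := by exact_mod_cast ht.ne'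
  have hs0' : (s:ℂ) ≠ 0 := by exact_mod_cast hs0.ne'
  set u : ℝ := s * x with hu_def
  set τ : ℂ := (t : ℂ) * Complex.I with hτ_def
  set z : ℂ := (u : ℂ) + τ / 2 with hz_def
  set τ₂ : ℂ := Complex.I / (t : ℂ) with hτ₂_def
  set z₂ : ℂ := (1/2 : ℂ) - ((u : ℂ) / t) * Complex.I with hz₂_def
  -- numeric bounds
  have hsε : 2 * π * C * s < ε := by
    have h1 : s < ε / (2 * π * C) := by
      rw [hs_def, Real.sqrt_lt' (by positivity)]
      calc t < ε ^ 2 / (4 * π ^ 2 * C ^ 2) := ht'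
        _ = (ε / (2 * π * C)) ^ 2 := by rw [div_pow]; ring_nf
    calc 2 * π * C * s < 2 * π * C * (ε / (2 * π * C)) := by
          exact mul_lt_mul_of_pos_left h1 (by positivity)
      _ = ε := by field_simp
  have ht1 : t ≤ 1 := by
    have h1 : t * (4 * π ^ 2 * C ^ 2) < ε ^ 2 := (lt_div_iff₀ (by positivity)).mp ht'
    have h2 : ε ^ 2 < 4 * C ^ 2 := by nlinarith
    have h3 : t * π ^ 2 < 1 := by nlinarith [mul_pos hC hC]
    have hπ2 : (1:ℝ) ≤ π ^ 2 := by nlinarith [Real.pi_gt_three]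
    nlinarith [mul_nonneg ht.le (sub_nonneg.mpr hπ2)]
  have h2pu : 2 * π * |u| ≤ ε := by
    have : |u| ≤ s * C := by
      rw [hu_def, abs_mul, abs_of_pos hs0]
      exact mul_le_mul_of_nonneg_left hx hs0.le
    nlinarith
  -- Step A: rewrite sum via jacobiTheta₂
  have hterm : ∀ n : ℤ, (-1 : ℂ) ^ n * Complex.exp (-(π : ℂ) * t * (n + 1/2) ^ 2) *
      Complex.exp ((2 * n + 1) * π * Complex.I * (1/2 + (Real.sqrt t : ℂ) * x)) =
      (Complex.I * Complex.exp ((π : ℂ) * Complex.I * u - π * t / 4)) *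
        jacobiTheta₂_term n z τ := by
    intro n
    have h1 : (-1 : ℂ) ^ n = Complex.exp ((n : ℂ) * (π * Complex.I)) := by
      rw [Complex.exp_int_mul, Complex.exp_pi_mul_I]
    have hI : Complex.exp ((π / 2 : ℂ) * Complex.I) = Complex.I := by
      rw [Complex.exp_mul_I]; simp
    rw [jacobiTheta₂_term, h1, ← Complex.exp_add, ← Complex.exp_add]
    rw [show ((n : ℂ) * (π * Complex.I) + -(π : ℂ) * t * (n + 1/2) ^ 2 +
        (2 * n + 1) * π * Complex.I * (1/2 + (Real.sqrt t : ℂ) * x)) =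
        (((π : ℂ) * Complex.I * u - π * t / 4) +
          (2 * π * Complex.I * n * z + π * Complex.I * n ^ 2 * τ)) + ((π / 2 : ℂ) * Complex.I)
          + (n : ℂ) * (2 * π * Complex.I) from ?_,
      Complex.exp_add, Complex.exp_add, Complex.exp_int_mul_two_pi_mul_I, mul_one,
      Complex.exp_add, hI]
    · push_cast; ring
    · rw [hz_def, hτ_def, hu_def]
      push_cast
      linear_combination (-(π : ℂ) * t * (n:ℂ)^2 - (π : ℂ) * t * n) * Complex.I_sq
  have hsum1 : (-Complex.I) * (∑' n : ℤ, (-1 : ℂ) ^ n *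
      Complex.exp (-(π : ℂ) * t * (n + 1/2) ^ 2) *
      Complex.exp ((2 * n + 1) * π * Complex.I * (1/2 + (Real.sqrt t : ℂ) * x)))
      = Complex.exp ((π : ℂ) * Complex.I * u - π * t / 4) * jacobiTheta₂ z τ := by
    rw [tsum_congr hterm, tsum_mul_left, jacobiTheta₂, ← mul_assoc, ← mul_assoc, neg_mul,
      Complex.I_mul_I, neg_neg, one_mul]
  -- Step B: functional equation
  have hA : (-Complex.I * τ) ^ (1/2 : ℂ) = (s : ℂ) := by
    have h1 : -Complex.I * τ = (t : ℂ) := by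
      rw [hτ_def]; linear_combination (-(t:ℂ)) * Complex.I_sq
    rw [h1, show ((1:ℂ)/2) = ((1/2 : ℝ) : ℂ) by norm_num,
      ← Complex.ofReal_cpow ht.le, hs_def, Real.sqrt_eq_rpow]
  have hC' : z / τ = z₂ := by
    rw [hz_def, hτ_def, hz₂_def]
    field_simp
    linear_combination (2*(u:ℂ)) * Complex.I_sq
  have hD : -1 / τ = τ₂ := by
    rw [hτ_def, hτ₂_def]
    field_simp
    linear_combination (-1:ℂ) * Complex.I_sq
  have hB : Complex.exp (-(π:ℂ) * Complex.I * z ^ 2 / τ)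
      = Complex.exp (-(π:ℂ) * x ^ 2 - π * Complex.I * u + π * t / 4) := by
    congr 1
    rw [hz_def, hτ_def]
    have hu2 : (u:ℂ)^2 = (t:ℂ) * (x:ℂ)^2 := by
      rw [hu_def]; push_cast; rw [← hss]; push_cast; ring
    field_simp
    linear_combination (-4*(t:ℂ)^2) * Complex.I_sq + (-16:ℂ) * hu2
  have hΘ : jacobiTheta₂ z τ = (1 / (s:ℂ)) *
      Complex.exp (-(π:ℂ) * x ^ 2 - π * Complex.I * u + π * t / 4) * jacobiTheta₂ z₂ τ₂ := by
    rw [jacobiTheta₂_functional_equation z τ, hA, hC', hD, hB]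
  -- the main identity
  refine ⟨jacobiTheta₂ z₂ τ₂ - 1, ?_, ?_⟩
  · rw [hsum1, hΘ]
    have h9 : Complex.exp ((π : ℂ) * Complex.I * u - π * t / 4) *
        Complex.exp (-(π:ℂ) * x ^ 2 - π * Complex.I * u + π * t / 4)
        = ((Real.exp (-π * x ^ 2) : ℝ) : ℂ) := by
      rw [← Complex.exp_add, Complex.ofReal_exp]
      congr 1; push_cast; ring
    calc (s:ℂ) * (Complex.exp ((π : ℂ) * Complex.I * u - π * t / 4) *
          (1 / (s:ℂ) * Complex.exp (-(π:ℂ) * x ^ 2 - π * Complex.I * u + π * t / 4) *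
            jacobiTheta₂ z₂ τ₂))
        = ((s:ℂ) * (1 / (s:ℂ))) * ((Complex.exp ((π : ℂ) * Complex.I * u - π * t / 4) *
            Complex.exp (-(π:ℂ) * x ^ 2 - π * Complex.I * u + π * t / 4)) *
            jacobiTheta₂ z₂ τ₂) := by ring
      _ = ((Real.exp (-π * x ^ 2) : ℝ) : ℂ) * jacobiTheta₂ z₂ τ₂ := by
          rw [h9, mul_one_div_cancel hs0', one_mul]
      _ = ((Real.exp (-π * x ^ 2) : ℝ) : ℂ) * (1 + (jacobiTheta₂ z₂ τ₂ - 1)) := by ring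
  · -- the bound
    set g : ℤ → ℂ := fun k => jacobiTheta₂_term k z₂ τ₂ with hg_def
    have hτ₂im : 0 < τ₂.im := by
      rw [hτ₂_def]
      simp only [Complex.div_ofReal_im, Complex.I_im]
      positivity
    have hsummable : Summable g := (summable_jacobiTheta₂_term_iff z₂ τ₂).mpr hτ₂im
    have hg0 : g 0 = 1 := by simp [hg_def, jacobiTheta₂_term]
    have hR : jacobiTheta₂ z₂ τ₂ - 1 = ∑' k : ℤ, if k = 0 then 0 else g k := by
      have h := Summable.tsum_eq_add_tsum_ite hsummable 0
      rw [hg0] at h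
      rw [show jacobiTheta₂ z₂ τ₂ = ∑' k, g k from rfl, h]
      ring
    have habs : ∀ k : ℤ, ‖g k‖ = Real.exp ((2*π*k*u - π*(k:ℝ)^2)/t) := by
      intro k
      have hgk : g k = Complex.exp ((((2*π*k*u - π*(k:ℝ)^2)/t : ℝ) : ℂ)
          + ((π*k : ℝ) : ℂ) * Complex.I) := by
        show jacobiTheta₂_term k z₂ τ₂ = _
        rw [jacobiTheta₂_term]
        congr 1
        rw [hz₂_def, hτ₂_def]
        push_cast
        field_simp
        linear_combination (-2*(k:ℂ)*(u:ℂ) + (k:ℂ)^2) * Complex.I_sq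
      rw [hgk, Complex.norm_exp]
      congr 1
      simp only [Complex.add_re, Complex.ofReal_re, Complex.mul_re, Complex.ofReal_im,
        Complex.I_re, Complex.I_im, mul_zero, zero_mul, mul_one, sub_zero, zero_sub,
        add_zero, neg_zero]
    set r : ℝ := Real.exp (-π) with hr_def
    have hr0 : 0 < r := Real.exp_pos _
    have hr1 : r < 1 := Real.exp_lt_one_iff.mpr (by linarith)
    set c : ℝ := Real.exp (-(π - ε) / t) with hc_def
    have hc0 : 0 < c := Real.exp_pos _
    set F : ℤ → ℝ := fun k => c * r ^ (k.natAbs - 1) with hF_def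
    have hgeo : HasSum (fun n : ℕ => c * r ^ n) (c * (1 - r)⁻¹) :=
      (hasSum_geometric_of_lt_one hr0.le hr1).mul_left c
    have hFpos : HasSum (fun n : ℕ => F (n : ℤ)) (c * (1 - r)⁻¹ + c) := by
      have h1 : HasSum (fun n : ℕ => F ((n + 1 : ℕ) : ℤ)) (c * (1 - r)⁻¹) := by
        have heq : (fun n : ℕ => F ((n + 1 : ℕ) : ℤ)) = fun n : ℕ => c * r ^ n := by
          funext n
          show c * r ^ ((((n : ℕ) + 1 : ℕ) : ℤ).natAbs - 1) = c * r ^ n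
          congr 1
        rw [heq]; exact hgeo
      have h3 : F (((0:ℕ)) : ℤ) = c := by
        show c * r ^ ((((0:ℕ)) : ℤ).natAbs - 1) = c
        norm_num
      have h2 := (hasSum_nat_add_iff (f := fun n : ℕ => F (n : ℤ)) 1).mp h1
      rw [Finset.sum_range_one, h3] at h2
      exact h2
    have hFneg : HasSum (fun n : ℕ => F (-((n : ℤ) + 1))) (c * (1 - r)⁻¹) := by
      have heq : (fun n : ℕ => F (-((n : ℤ) + 1))) = fun n : ℕ => c * r ^ n := by
        funext n
        show c * r ^ ((-((n : ℤ) + 1)).natAbs - 1) = c * r ^ n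
        congr 1
      rw [heq]; exact hgeo
    have hFsum : HasSum F ((c * (1 - r)⁻¹ + c) + c * (1 - r)⁻¹) :=
      HasSum.of_nat_of_neg_add_one hFpos hFneg
    have hle : ∀ k : ℤ, ‖if k = 0 then (0:ℂ) else g k‖ ≤ F k := by
      intro k
      by_cases hk : k = 0
      · rw [if_pos hk, norm_zero, hF_def]
        positivity
      · have hFk : F k = c * r ^ (k.natAbs - 1) := rfl
        rw [if_neg hk, habs k, hFk]
        have hm1 : 1 ≤ (k.natAbs : ℝ) := by
          exact_mod_cast Nat.one_le_iff_ne_zero.mpr (Int.natAbs_ne_zero.mpr hk)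
        have hmk : |(k:ℝ)| = (k.natAbs : ℝ) := by rw [Nat.cast_natAbs, Int.cast_abs]
        have hcast : ((k.natAbs - 1 : ℕ) : ℝ) = (k.natAbs : ℝ) - 1 := by
          rw [Nat.cast_sub (Nat.one_le_iff_ne_zero.mpr (Int.natAbs_ne_zero.mpr hk))]
          norm_num
        set m : ℝ := (k.natAbs : ℝ) with hm_def
        rw [hc_def, hr_def, ← Real.exp_nat_mul, ← Real.exp_add, Real.exp_le_exp, hcast]
        have hku : (k:ℝ) * u ≤ m * |u| := by
          calc (k:ℝ) * u ≤ |(k:ℝ) * u| := le_abs_self _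
            _ = |(k:ℝ)| * |u| := abs_mul _ _
            _ = m * |u| := by rw [hmk]
        have hk2 : (k:ℝ)^2 = m^2 := by rw [← hmk]; exact (_root_.sq_abs _).symm
        have key1 : 2*π*(k:ℝ)*u - π*(k:ℝ)^2 ≤ m*ε - π*m^2 := by
          have h1 : 2*π*((k:ℝ)*u) ≤ 2*π*(m*|u|) :=
            mul_le_mul_of_nonneg_left hku (by positivity)
          have h2 : m*(2*π*|u|) ≤ m*ε := mul_le_mul_of_nonneg_left h2pu (by linarith)
          have h3 : π*(k:ℝ)^2 = π*m^2 := by rw [hk2]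
          linarith [h1, h2, h3]
        have key2 : m*ε - π*m^2 ≤ -(π - ε) + (m - 1)*(-π)*t := by
          have ha : 0 ≤ (m - 1) * (π*m - ε) :=
            mul_nonneg (by linarith)
              (by nlinarith [mul_nonneg hπ.le (by linarith : (0:ℝ) ≤ m - 1), Real.pi_gt_three])
          have hb : 0 ≤ (m - 1) * π * (1 - t) :=
            mul_nonneg (mul_nonneg (by linarith) hπ.le) (by linarith)
          nlinarith [ha, hb]
        calc (2*π*(k:ℝ)*u - π*(k:ℝ)^2)/t ≤ (-(π - ε) + (m - 1)*(-π)*t)/t := by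
              apply (div_le_div_iff_of_pos_right ht).mpr
              linarith
          _ = -(π - ε)/t + (m - 1)*(-π) := by field_simp
    have hsn : Summable (fun k : ℤ => ‖if k = 0 then (0:ℂ) else g k‖) :=
      Summable.of_nonneg_of_le (fun k => norm_nonneg _) hle hFsum.summable
    calc ‖jacobiTheta₂ z₂ τ₂ - 1‖
        = ‖∑' k : ℤ, if k = 0 then (0:ℂ) else g k‖ := by rw [hR]
      _ ≤ ∑' k : ℤ, ‖if k = 0 then (0:ℂ) else g k‖ := norm_tsum_le_tsum_norm hsn
      _ ≤ ∑' k : ℤ, F k := Summable.tsum_le_tsum hle hsn hFsum.summable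
      _ = (c * (1 - r)⁻¹ + c) + c * (1 - r)⁻¹ := hFsum.tsum_eq
      _ ≤ (4 - 2*r)/(1 - r) * c := by
          rw [div_mul_eq_mul_div, le_div_iff₀ (by linarith : (0:ℝ) < 1 - r)]
          have h1r : c * ((1 - r)⁻¹ * (1 - r)) = c := by
            rw [inv_mul_cancel₀ (by linarith : (1:ℝ) - r ≠ 0), mul_one]
          nlinarith [mul_nonneg hc0.le (sub_nonneg.mpr hr1.le)]
end

section
/- For each fixed x ∈ ℝ, the function t ↦ √t · θ₃(√t·x | it) tends to e^{-πx²} as t → 0⁺; moreover, for |x| ≤ C the convergence is uniform in x. -/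
open Real Complex Filter

noncomputable def gterm (t x : ℝ) (n : ℤ) : ℝ := rexp (-π / t * ((n : ℝ) - Real.sqrt t * x) ^ 2)

lemma gterm_summable {t : ℝ} (ht : 0 < t) (x : ℝ) : Summable (gterm t x) := by
  set v := Real.sqrt t * x with hv
  have hsum := summable_pow_mul_jacobiTheta₂_term_bound (|v| / t) (one_div_pos.mpr ht) 0
  simp only [pow_zero, one_mul] at hsum
  refine hsum.of_nonneg_of_le (fun n => (Real.exp_pos _).le) (fun n => ?_)
  rw [gterm, Real.exp_le_exp]
  have hnv : (n : ℝ) * v ≤ |(n : ℝ)| * |v| := by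
    calc (n : ℝ) * v ≤ |(n : ℝ) * v| := le_abs_self _
    _ = |(n : ℝ)| * |v| := abs_mul _ _
  have hkey : ((n : ℝ)^2 - 2 * |v| * |(n : ℝ)|) ≤ ((n : ℝ) - v)^2 := by nlinarith [sq_nonneg v]
  have h3 := mul_le_mul_of_nonneg_left hkey (div_pos pi_pos ht).le
  have h4 : -π * (1 / t * (n : ℤ)^2 - 2 * (|v| / t) * |(n : ℤ)|) =
      -(π / t * ((n : ℝ)^2 - 2 * |v| * |(n : ℝ)|)) := by
    push_cast
    field_simp
  rw [h4]
  have : -π / t * ((n : ℝ) - v)^2 = -(π / t * ((n : ℝ) - v)^2) := by ring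
  rw [this]
  exact neg_le_neg h3

lemma key_identity {t : ℝ} (ht : 0 < t) (x : ℝ) :
    (Real.sqrt t : ℂ) * ∑' n : ℤ, Complex.exp (-(π : ℂ) * t * n ^ 2 +
        2 * π * Complex.I * n * (Real.sqrt t * x)) = ((∑' n : ℤ, gterm t x n : ℝ) : ℂ) := by
  have ha : 0 < ((t : ℂ)).re := by simpa using ht
  have h := Complex.tsum_exp_neg_quadratic ha (Complex.I * (Real.sqrt t * x : ℝ))
  have h1 : (∑' n : ℤ, Complex.exp (-(π : ℂ) * t * n ^ 2 +
      2 * π * Complex.I * n * (Real.sqrt t * x))) =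
      ∑' n : ℤ, cexp (-π * (t:ℂ) * n ^ 2 + 2 * π * (Complex.I * (Real.sqrt t * x : ℝ)) * n) := by
    refine tsum_congr fun n => ?_
    push_cast
    ring_nf
  rw [h1, h]
  have h2 : ((t : ℂ)) ^ (1/2 : ℂ) = (Real.sqrt t : ℂ) := by
    rw [show (1/2 : ℂ) = ((1/2 : ℝ) : ℂ) by norm_num, ← Complex.ofReal_cpow ht.le,
      Real.sqrt_eq_rpow]
  have hs : (Real.sqrt t : ℂ) ≠ 0 := by
    simpa using (Real.sqrt_pos.mpr ht).ne'
  rw [h2, ← mul_assoc, mul_one_div, div_self hs, one_mul, Complex.ofReal_tsum]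
  refine tsum_congr fun n => ?_
  rw [gterm, Complex.ofReal_exp]
  congr 1
  simp only [Complex.ofReal_mul, Complex.ofReal_div, Complex.ofReal_neg, Complex.ofReal_pow,
    Complex.ofReal_sub, Complex.ofReal_intCast]
  rw [show Complex.I * (Complex.I * ((Real.sqrt t : ℂ) * x)) = -((Real.sqrt t : ℂ) * x) by
    rw [← mul_assoc, Complex.I_mul_I]; ring]
  ring

lemma gauss_summable : Summable (fun n : ℤ => rexp (-π * (n : ℝ) ^ 2)) := by
  have h := summable_pow_mul_jacobiTheta₂_term_bound 0 one_pos 0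
  simpa using h

noncomputable def Ksum : ℝ := ∑' n : ℤ, rexp (-π * (n : ℝ) ^ 2)

lemma gterm_zero {t : ℝ} (ht : 0 < t) (x : ℝ) : gterm t x 0 = rexp (-π * x ^ 2) := by
  rw [gterm]
  congr 1
  have h : ((0 : ℤ) : ℝ) - Real.sqrt t * x = -(Real.sqrt t * x) := by norm_num
  rw [h, neg_sq, mul_pow, Real.sq_sqrt ht.le]
  field_simp

lemma err_bound {t C x : ℝ} (ht : 0 < t) (ht4 : t ≤ 1/4) (hx : |x| ≤ C)
    (htC : Real.sqrt t * C ≤ 1/2) :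
    |∑' n : ℤ, gterm t x n - rexp (-π * x ^ 2)| ≤ rexp π * rexp (-π/(4*t)) * Ksum := by
  have hsum := gterm_summable ht x
  have hsplit := hsum.tsum_eq_add_tsum_ite 0
  rw [gterm_zero ht x] at hsplit
  have hdiff : ∑' n : ℤ, gterm t x n - rexp (-π * x ^ 2)
      = ∑' n : ℤ, ite (n = 0) 0 (gterm t x n) := by rw [hsplit]; ring
  rw [hdiff]
  set a := Real.sqrt t * x with hadef
  have ha : |a| ≤ 1/2 := by
    rw [hadef, abs_mul, _root_.abs_of_nonneg (Real.sqrt_nonneg t)]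
    calc Real.sqrt t * |x| ≤ Real.sqrt t * C :=
          mul_le_mul_of_nonneg_left hx (Real.sqrt_nonneg t)
      _ ≤ 1/2 := htC
  have hbound : ∀ n : ℤ, ite (n = 0) 0 (gterm t x n)
      ≤ rexp π * rexp (-π/(4*t)) * rexp (-π * (n : ℝ) ^ 2) := by
    intro n
    by_cases hn : n = 0
    · simp only [hn, if_pos]
      positivity
    · rw [if_neg hn]
      have hn1 : (1 : ℝ) ≤ |(n : ℝ)| := by
        rw [← Int.cast_abs]
        exact_mod_cast Int.one_le_abs hn
      have h5 : |(n : ℝ)| / 2 ≤ |(n : ℝ) - a| :=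
        calc |(n : ℝ)| / 2 ≤ |(n : ℝ)| - 1/2 := by linarith
          _ ≤ |(n : ℝ)| - |a| := by linarith
          _ ≤ |(n : ℝ) - a| := abs_sub_abs_le_abs_sub _ _
      have hsq : (n : ℝ) ^ 2 ≤ 4 * ((n : ℝ) - a) ^ 2 := by
        nlinarith [pow_le_pow_left₀ (by positivity) h5 2, _root_.sq_abs ((n:ℝ) - a),
          _root_.sq_abs (n:ℝ)]
      have hn2 : (1 : ℝ) ≤ (n : ℝ) ^ 2 := by
        nlinarith [hn1, abs_nonneg (n:ℝ), _root_.sq_abs (n:ℝ)]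
      rw [gterm, ← hadef, ← Real.exp_add, ← Real.exp_add, Real.exp_le_exp,
        ← mul_le_mul_iff_of_pos_right (show (0:ℝ) < 4*t by linarith)]
      have e1 : -π / t * ((n:ℝ) - a) ^ 2 * (4*t) = -(4 * π) * ((n:ℝ) - a) ^ 2 := by
        field_simp
      have e2 : (π + -π/(4*t) + -π * (n:ℝ)^2) * (4*t)
          = 4*π*t - π - 4*π*t*(n:ℝ)^2 := by field_simp; ring
      rw [e1, e2]
      nlinarith [mul_nonneg (mul_nonneg pi_pos.le (sub_nonneg.2 hn2))
          (show (0:ℝ) ≤ 1 - 4*t by linarith),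
        mul_le_mul_of_nonneg_left hsq pi_pos.le]
  have hbs : Summable (fun n : ℤ => rexp π * rexp (-π/(4*t)) * rexp (-π * (n : ℝ) ^ 2)) :=
    gauss_summable.mul_left _
  have hnonneg : ∀ n : ℤ, 0 ≤ ite (n = 0) 0 (gterm t x n) := by
    intro n; by_cases hn : n = 0 <;> simp [hn, gterm, Real.exp_pos, le_of_lt]
  rw [_root_.abs_of_nonneg (tsum_nonneg hnonneg)]
  calc ∑' n : ℤ, ite (n = 0) 0 (gterm t x n)
      ≤ ∑' n : ℤ, rexp π * rexp (-π/(4*t)) * rexp (-π * (n : ℝ) ^ 2) := by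
        refine Summable.tsum_le_tsum hbound ?_ hbs
        exact hsum.of_nonneg_of_le hnonneg (fun n => by
          by_cases hn : n = 0 <;> simp [hn, gterm, Real.exp_pos, le_of_lt])
    _ = rexp π * rexp (-π/(4*t)) * Ksum := by rw [tsum_mul_left]; rfl

lemma bound_tendsto : Filter.Tendsto (fun t : ℝ => rexp π * rexp (-π/(4*t)) * Ksum)
    (nhdsWithin 0 (Set.Ioi 0)) (nhds 0) := by
  have h1 : Filter.Tendsto (fun t : ℝ => π/(4*t)) (nhdsWithin 0 (Set.Ioi 0)) atTop := by
    have h2 : Filter.Tendsto (fun t : ℝ => t⁻¹) (nhdsWithin 0 (Set.Ioi 0)) atTop :=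
      tendsto_inv_nhdsGT_zero
    have h3 := h2.const_mul_atTop (show (0:ℝ) < π/4 by positivity)
    refine h3.congr fun t => ?_
    field_simp
  have h4 : Filter.Tendsto (fun t : ℝ => rexp (-π/(4*t))) (nhdsWithin 0 (Set.Ioi 0)) (nhds 0) := by
    have := Real.tendsto_exp_neg_atTop_nhds_zero.comp h1
    refine this.congr fun t => ?_
    simp [Function.comp, neg_div]
  have h5 := (h4.const_mul (rexp π)).mul_const Ksum
  rw [show rexp π * 0 * Ksum = 0 by ring] at h5
  exact h5

theorem main_uniform (C : ℝ) (hC : 0 < C) : TendstoUniformlyOn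
    (fun (t : ℝ) (x : ℝ) => (Real.sqrt t : ℂ) *
      ∑' n : ℤ, Complex.exp (-(π : ℂ) * t * n ^ 2 +
        2 * π * Complex.I * n * (Real.sqrt t * x)))
    (fun x : ℝ => ((Real.exp (-π * x ^ 2) : ℝ) : ℂ))
    (nhdsWithin 0 (Set.Ioi 0)) {x : ℝ | |x| ≤ C} := by
  rw [Metric.tendstoUniformlyOn_iff]
  intro ε hε
  have hev1 : ∀ᶠ t : ℝ in nhdsWithin 0 (Set.Ioi 0),
      rexp π * rexp (-π/(4*t)) * Ksum < ε :=
    bound_tendsto.eventually_lt_const hε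
  have hev2 : ∀ᶠ t : ℝ in nhdsWithin 0 (Set.Ioi 0), 0 < t := self_mem_nhdsWithin
  have hδ : (0:ℝ) < min (1/4) ((1/(2*C))^2) := by positivity
  have hev3 : ∀ᶠ t : ℝ in nhdsWithin 0 (Set.Ioi 0), t < min (1/4) ((1/(2*C))^2) :=
    ((eventually_lt_nhds hδ).filter_mono nhdsWithin_le_nhds)
  filter_upwards [hev1, hev2, hev3] with t hlt ht htm
  intro x hx
  replace hx : |x| ≤ C := hx
  have ht4 : t ≤ 1/4 := le_of_lt (lt_of_lt_of_le htm (min_le_left _ _))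
  have htC : Real.sqrt t * C ≤ 1/2 := by
    have h6 : Real.sqrt t ≤ 1/(2*C) := by
      rw [show (1/(2*C)) = Real.sqrt ((1/(2*C))^2) by
        rw [Real.sqrt_sq (by positivity)]]
      exact Real.sqrt_le_sqrt (le_of_lt (lt_of_lt_of_le htm (min_le_right _ _)))
    calc Real.sqrt t * C ≤ (1/(2*C)) * C := mul_le_mul_of_nonneg_right h6 hC.le
      _ = 1/2 := by field_simp
  rw [dist_eq_norm, key_identity ht x, ← Complex.ofReal_sub, Complex.norm_real]
  calc |rexp (-π * x ^ 2) - ∑' n : ℤ, gterm t x n|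
      = |∑' n : ℤ, gterm t x n - rexp (-π * x ^ 2)| := abs_sub_comm _ _
    _ ≤ rexp π * rexp (-π/(4*t)) * Ksum := err_bound ht ht4 hx htC
    _ < ε := hlt

theorem theta3_tendsto_gaussian :
    (∀ x : ℝ, Filter.Tendsto
        (fun t : ℝ => (Real.sqrt t : ℂ) *
          ∑' n : ℤ, Complex.exp (-(π : ℂ) * t * n ^ 2 +
            2 * π * Complex.I * n * (Real.sqrt t * x)))
        (nhdsWithin 0 (Set.Ioi 0))
        (nhds ((Real.exp (-π * x ^ 2) : ℝ) : ℂ))) ∧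
    (∀ C : ℝ, 0 < C → TendstoUniformlyOn
        (fun (t : ℝ) (x : ℝ) => (Real.sqrt t : ℂ) *
          ∑' n : ℤ, Complex.exp (-(π : ℂ) * t * n ^ 2 +
            2 * π * Complex.I * n * (Real.sqrt t * x)))
        (fun x : ℝ => ((Real.exp (-π * x ^ 2) : ℝ) : ℂ))
        (nhdsWithin 0 (Set.Ioi 0))
        {x : ℝ | |x| ≤ C}) := by
  refine ⟨fun x => ?_, main_uniform⟩
  have h := (main_uniform (|x| + 1) (by positivity)).tendsto_at
    (show x ∈ {y : ℝ | |y| ≤ |x| + 1} by simp [Set.mem_setOf_eq])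
  exact h
end
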